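/- arXiv:1511.08405 — 7 statements merged into one kernel-verified Lean document; each statement's English description precedes it below -/
import Mathlib

section
/- Let d ≥ 1, s an integer with 3 ≤ s ≤ d, and T ≥ 1. There exists a full-information strategy (Online Mirror Descent with regularizer h_p for p = 1 + (2 log s − 1)^{−1} and parameter η = √((p−1)/(T s^{2/q})), where 1/p + 1/q = 1) such that for every sequence g_1,…,g_T of s-sparse gain vectors in [0,1]^d, the regret satisfies R_T ≤ √(2e T log s). -/
open Finset Filter MeasureTheory ProbabilityTheory Real

set_option maxHeartbeats 1000000

noncomputable section

/-- Number of nonzero coordinates of a vector in `ℝ^d`. -/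
def supp0 {d : ℕ} (w : Fin d → ℝ) : ℕ := Set.ncard {i | w i ≠ 0}

/-- A vector is `s`-sparse if at most `s` of its coordinates are nonzero. -/
def IsSparse {d : ℕ} (s : ℕ) (w : Fin d → ℝ) : Prop := supp0 w ≤ s

/-- All coordinates lie in `[0,1]`. -/
def InCube {d : ℕ} (w : Fin d → ℝ) : Prop := ∀ i, w i ∈ Set.Icc (0:ℝ) 1

/-- A full-information strategy is valid if it always plays a point of the simplex `Δ_d`. -/
def IsStrategy {d : ℕ} (σ : ∀ t : ℕ, (Fin t → (Fin d → ℝ)) → (Fin d → ℝ)) : Prop :=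
  ∀ t h, (∀ i, 0 ≤ σ t h i) ∧ ∑ i, σ t h i = 1

/-- The mixed action played at stage `t` against the sequence `ω` of outcome vectors. -/
def play {d : ℕ} (σ : ∀ t : ℕ, (Fin t → (Fin d → ℝ)) → (Fin d → ℝ))
    (ω : ℕ → Fin d → ℝ) (t : ℕ) : Fin d → ℝ := σ t fun k => ω k

/-- Regret after `T` stages when outcomes are gains. -/
def gainRegret {d : ℕ} (σ : ∀ t : ℕ, (Fin t → (Fin d → ℝ)) → (Fin d → ℝ))
    (g : ℕ → Fin d → ℝ) (T : ℕ) : ℝ :=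
  (⨆ i, ∑ t ∈ Finset.range T, g t i) -
    ∑ t ∈ Finset.range T, ∑ i, g t i * play σ g t i

namespace OMDaux

variable {d : ℕ}

def sump (p : ℝ) (v : Fin d → ℝ) : ℝ := ∑ i, |v i| ^ p
def Np2 (p : ℝ) (v : Fin d → ℝ) : ℝ := (sump p v) ^ (2 / p)

lemma holder_B {p : ℝ} (hp1 : 1 < p) (hp2 : p < 2) (I : Finset (Fin d)) (w v : Fin d → ℝ)
    (hw : ∀ i ∈ I, 0 < w i) (hv : ∀ i ∉ I, v i = 0) :
    Np2 p v ≤ (∑ i ∈ I, w i ^ (p-2) * v i ^ 2) * (∑ i ∈ I, w i ^ p) ^ (2/p - 1) := by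
  have hp0 : (0:ℝ) < p := by linarith
  have hp0' : p ≠ 0 := ne_of_gt hp0
  have h2p : (0:ℝ) < 2 - p := by linarith
  have heq : Real.HolderConjugate (2/p) (2/(2-p)) := by
    refine Real.holderConjugate_iff.mpr ⟨?_, ?_⟩
    · rw [lt_div_iff₀ hp0]; linarith
    · rw [← one_div, ← one_div, one_div_div, one_div_div]; ring
  have H := Real.inner_le_Lp_mul_Lq I (fun i => |v i| ^ p * w i ^ (p*(p-2)/2))
      (fun i => w i ^ (p*(2-p)/2)) heq
  -- rewrite LHS of H
  have hL : ∑ i ∈ I, (|v i| ^ p * w i ^ (p*(p-2)/2)) * w i ^ (p*(2-p)/2) = ∑ i ∈ I, |v i| ^ p := by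
    refine Finset.sum_congr rfl fun i hi => ?_
    rw [mul_assoc, ← Real.rpow_add (hw i hi)]
    norm_num [show p*(p-2)/2 + p*(2-p)/2 = 0 by ring]
  have hB' : ∀ i ∈ I, |(|v i| ^ p * w i ^ (p*(p-2)/2))| ^ (2/p) = w i ^ (p-2) * v i ^ 2 := by
    intro i hi
    have h1 : (0:ℝ) ≤ |v i| ^ p * w i ^ (p*(p-2)/2) :=
      mul_nonneg (Real.rpow_nonneg (abs_nonneg _) _) (Real.rpow_nonneg (hw i hi).le _)
    rw [abs_of_nonneg h1, Real.mul_rpow (Real.rpow_nonneg (abs_nonneg _) _)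
      (Real.rpow_nonneg (hw i hi).le _), ← Real.rpow_mul (abs_nonneg (v i)),
      ← Real.rpow_mul (hw i hi).le,
      show p * (2/p) = 2 by field_simp,
      show (p*(p-2)/2)*(2/p) = p-2 by field_simp,
      show (2:ℝ) = ((2:ℕ):ℝ) by norm_num, Real.rpow_natCast, sq_abs]
    ring
  have hC : ∀ i ∈ I, |w i ^ (p*(2-p)/2)| ^ (2/(2-p)) = w i ^ p := by
    intro i hi
    rw [abs_of_nonneg (Real.rpow_nonneg (hw i hi).le _), ← Real.rpow_mul (hw i hi).le,
      show (p*(2-p)/2)*(2/(2-p)) = p by field_simp]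
  rw [hL, Finset.sum_congr rfl hB', Finset.sum_congr rfl hC, one_div_div, one_div_div] at H
  -- now H : ∑ i ∈ I, |v i| ^ p ≤ B' ^ (p/2) * S ^ ((2-p)/2)
  have hsump : sump p v = ∑ i ∈ I, |v i| ^ p := by
    refine (Finset.sum_subset (Finset.subset_univ I) fun i _ hi => ?_).symm
    rw [hv i hi, abs_zero, Real.zero_rpow hp0']
  have hBnn : (0:ℝ) ≤ ∑ i ∈ I, w i ^ (p-2) * v i ^ 2 :=
    Finset.sum_nonneg fun i hi => mul_nonneg (Real.rpow_nonneg (hw i hi).le _) (sq_nonneg _)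
  have hSnn : (0:ℝ) ≤ ∑ i ∈ I, w i ^ p :=
    Finset.sum_nonneg fun i hi => Real.rpow_nonneg (hw i hi).le _
  have h2 : Np2 p v ≤ (((∑ i ∈ I, w i ^ (p-2) * v i ^ 2) ^ (p/2)) *
      ((∑ i ∈ I, w i ^ p) ^ ((2-p)/2))) ^ (2/p) := by
    rw [Np2, hsump]
    exact Real.rpow_le_rpow (Finset.sum_nonneg fun i _ => Real.rpow_nonneg (abs_nonneg _) _)
      H (by positivity)
  calc Np2 p v ≤ _ := h2
    _ = (∑ i ∈ I, w i ^ (p-2) * v i ^ 2) * (∑ i ∈ I, w i ^ p) ^ (2/p - 1) := by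
        rw [Real.mul_rpow (Real.rpow_nonneg hBnn _) (Real.rpow_nonneg hSnn _),
          ← Real.rpow_mul hBnn, ← Real.rpow_mul hSnn,
          show (p/2) * (2/p) = 1 by field_simp,
          show ((2-p)/2) * (2/p) = 2/p - 1 by field_simp,
          Real.rpow_one]



def Freg (p : ℝ) (v : Fin d → ℝ) : ℝ := Np2 p v / 2

lemma continuous_sump {p : ℝ} (hp : 0 < p) : Continuous (sump (d := d) p) := by
  refine continuous_finset_sum _ fun i _ => ?_
  exact ((continuous_apply i).abs).rpow_const fun x => Or.inr hp.le

lemma continuous_Freg {p : ℝ} (hp : 0 < p) : Continuous (Freg (d := d) p) := by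
  refine Continuous.div_const ?_ 2
  exact (continuous_sump hp).rpow_const fun x => Or.inr (by positivity)

lemma convex_core {p : ℝ} (hp1 : 1 < p) (hp2 : p < 2) {x y : Fin d → ℝ}
    (hx : x ∈ stdSimplex ℝ (Fin d)) (hy : y ∈ stdSimplex ℝ (Fin d)) (k0 k1 : ℝ) :
    ConvexOn ℝ (Set.Icc (0:ℝ) 1)
      (fun θ : ℝ => Freg p (fun i => x i + θ * (y i - x i)) -
        (k0 + k1 * θ + ((p-1) * Np2 p (fun i => y i - x i)) * θ^2 / 2)) := by
  classical
  have hp0 : (0:ℝ) < p := by linarith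
  have hp0' : p ≠ 0 := ne_of_gt hp0
  set v : Fin d → ℝ := fun i => y i - x i with hvdef
  set c : ℝ := (p-1) * Np2 p v with hcdef
  set I : Finset (Fin d) := Finset.univ.filter (fun i => x i ≠ 0 ∨ y i ≠ 0) with hIdef
  have hnotI : ∀ i ∉ I, x i = 0 ∧ y i = 0 := by
    intro i hi
    simp only [hIdef, Finset.mem_filter, Finset.mem_univ, true_and, not_or, not_not] at hi
    tauto
  have hvI : ∀ i ∉ I, v i = 0 := fun i hi => by
    simp [hvdef, (hnotI i hi).1, (hnotI i hi).2]
  set S : ℝ → ℝ := fun θ => ∑ i ∈ I, (x i + θ * v i) ^ p with hSdef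
  set A : ℝ → ℝ := fun θ => ∑ i ∈ I, (x i + θ * v i) ^ (p-1) * v i with hAdef
  set B : ℝ → ℝ := fun θ => ∑ i ∈ I, (x i + θ * v i) ^ (p-2) * v i ^ 2 with hBdef
  have hw0 : ∀ θ ∈ Set.Icc (0:ℝ) 1, ∀ i, 0 ≤ x i + θ * v i := by
    intro θ hθ i; have h1 := hx.1 i; have h2 := hy.1 i
    simp only [hvdef]; nlinarith [hθ.1, hθ.2]
  have hwpos : ∀ θ ∈ Set.Ioo (0:ℝ) 1, ∀ i ∈ I, 0 < x i + θ * v i := by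
    intro θ hθ i hi
    have hxi := hx.1 i; have hyi := hy.1 i
    simp only [hIdef, Finset.mem_filter, Finset.mem_univ, true_and] at hi
    rcases hi with h | h
    · have : 0 < x i := lt_of_le_of_ne hxi (Ne.symm h)
      simp only [hvdef]; nlinarith [hθ.1, hθ.2]
    · have : 0 < y i := lt_of_le_of_ne hyi (Ne.symm h)
      simp only [hvdef]; nlinarith [hθ.1, hθ.2]
  have hsumv : ∑ i, v i = 0 := by
    simp [hvdef, Finset.sum_sub_distrib, hx.2, hy.2]
  have hSpos : ∀ θ ∈ Set.Icc (0:ℝ) 1, 0 < S θ := by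
    intro θ hθ
    obtain ⟨j, hj⟩ : ∃ j, 0 < x j + θ * v j := by
      by_contra hcon; push_neg at hcon
      have hsum : ∑ i, (x i + θ * v i) = 1 := by
        rw [Finset.sum_add_distrib, ← Finset.mul_sum, hsumv, hx.2]; ring
      have := Finset.sum_nonpos (s := Finset.univ) fun i _ => hcon i
      rw [hsum] at this; linarith
    have hjI : j ∈ I := by
      by_contra hjn
      rw [(hnotI j hjn).1, hvI j hjn] at hj; simp at hj
    refine Finset.sum_pos' (fun i hi => Real.rpow_nonneg (hw0 θ hθ i) p) ⟨j, hjI, ?_⟩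
    exact Real.rpow_pos_of_pos hj p
  set f' : ℝ → ℝ := fun θ => (S θ)^(2/p-1) * A θ - (k1 + c * θ) with hf'def
  set f'' : ℝ → ℝ := fun θ =>
    (2-p) * (S θ)^(2/p-2) * (A θ)^2 + (p-1) * ((S θ)^(2/p-1) * B θ) - c with hf''def
  have hEq : ∀ θ ∈ Set.Icc (0:ℝ) 1,
      Freg p (fun i => x i + θ * v i) = (S θ)^(2/p)/2 := by
    intro θ hθ
    have h1 : sump p (fun i => x i + θ * v i) = S θ := by
      rw [hSdef, sump]
      refine (Finset.sum_subset (Finset.subset_univ I) fun i _ hi => ?_).symm.trans ?_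
      · rw [(hnotI i hi).1, hvI i hi]
        simp [Real.zero_rpow hp0']
      · exact Finset.sum_congr rfl fun i _ => by rw [abs_of_nonneg (hw0 θ hθ i)]
    rw [Freg, Np2, h1]
  -- derivative facts
  have hwD : ∀ (θ : ℝ) (i : Fin d), HasDerivAt (fun t => x i + t * v i) (v i) θ := by
    intro θ i
    simpa using ((hasDerivAt_id θ).mul_const (v i)).const_add (x i)
  have hSD : ∀ θ : ℝ, HasDerivAt S (p * A θ) θ := by
    intro θ
    have h := HasDerivAt.sum (fun i (_ : i ∈ I) =>
      HasDerivAt.rpow_const (p := p) (hwD θ i) (Or.inr hp1.le))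
    convert h using 1
    · exact rfl
    · exact rfl
    · exact funext fun t => (Finset.sum_apply (M := fun _ => ℝ) t I (fun i y => (x i + y * v i) ^ p)).symm
    rw [hAdef, Finset.mul_sum]
    exact Finset.sum_congr rfl fun i _ => by ring
  have hlinD : ∀ θ : ℝ, HasDerivAt (fun t => k0 + k1 * t + c * t^2/2) (k1 + c * θ) θ := by
    intro θ
    have h1 : HasDerivAt (fun t : ℝ => k0 + k1 * t) k1 θ := by
      simpa using ((hasDerivAt_id θ).const_mul k1).const_add k0
    have h2 : HasDerivAt (fun t : ℝ => c * t^2/2) (c * θ) θ := by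
      have h := ((hasDerivAt_pow 2 θ).const_mul c).div_const 2
      convert h using 1
      · exact rfl
      · exact rfl
      ring
    exact h1.add h2
  have hfSD : ∀ θ ∈ Set.Icc (0:ℝ) 1,
      HasDerivAt (fun t => (S t)^(2/p)/2 - (k0 + k1 * t + c * t^2/2)) (f' θ) θ := by
    intro θ hθ
    have hφ : HasDerivAt (fun t => (S t)^(2/p)/2) ((S θ)^(2/p-1) * A θ) θ := by
      have h := (HasDerivAt.rpow_const (p := 2/p) (hSD θ) (Or.inl (hSpos θ hθ).ne')).div_const 2
      convert h using 1
      · exact rfl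
      · exact rfl
      field_simp
    exact hφ.sub (hlinD θ)
  have hf'D : ∀ θ ∈ Set.Ioo (0:ℝ) 1, HasDerivAt f' (f'' θ) θ := by
    intro θ hθ
    have hθIcc : θ ∈ Set.Icc (0:ℝ) 1 := Set.mem_Icc.2 ⟨hθ.1.le, hθ.2.le⟩
    have hAD : HasDerivAt A ((p-1) * B θ) θ := by
      have h := HasDerivAt.sum (fun i (hi : i ∈ I) =>
        (HasDerivAt.rpow_const (p := p-1) (hwD θ i) (Or.inl (hwpos θ hθ i hi).ne')).mul_const (v i))
      convert h using 1
      · exact rfl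
      · exact rfl
      · exact funext fun t => (Finset.sum_apply (M := fun _ => ℝ) t I (fun i y => (x i + y * v i) ^ (p-1) * v i)).symm
      rw [hBdef, Finset.mul_sum]
      refine Finset.sum_congr rfl fun i _ => ?_
      rw [show p - 1 - 1 = p - 2 by ring]
      ring
    have hSpowD : HasDerivAt (fun t => (S t)^(2/p-1))
        ((p * A θ) * (2/p-1) * (S θ)^(2/p-1-1)) θ :=
      HasDerivAt.rpow_const (p := 2/p-1) (hSD θ) (Or.inl (hSpos θ hθIcc).ne')
    have hprod := hSpowD.mul hAD
    have hlin2 : HasDerivAt (fun t : ℝ => k1 + c * t) c θ := by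
      simpa using ((hasDerivAt_id θ).const_mul c).const_add k1
    have h := hprod.sub hlin2
    convert h using 1
    · exact rfl
    · exact rfl
    · exact rfl
    rw [hf''def, show (2:ℝ)/p - 1 - 1 = 2/p - 2 by ring]
    have hpne : p ≠ 0 := hp0'
    field_simp
  have hf''nn : ∀ θ ∈ Set.Ioo (0:ℝ) 1, 0 ≤ f'' θ := by
    intro θ hθ
    have hθIcc : θ ∈ Set.Icc (0:ℝ) 1 := Set.mem_Icc.2 ⟨hθ.1.le, hθ.2.le⟩
    have hH := holder_B hp1 hp2 I (fun i => x i + θ * v i) v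
      (fun i hi => hwpos θ hθ i hi) hvI
    have hc : c ≤ (p-1) * ((S θ)^(2/p-1) * B θ) := by
      rw [hcdef]
      refine mul_le_mul_of_nonneg_left ?_ (by linarith)
      calc Np2 p v ≤ _ := hH
        _ = (S θ)^(2/p-1) * B θ := by rw [hSdef, hBdef]; ring
    have h1 : 0 ≤ (2-p) * (S θ)^(2/p-2) * (A θ)^2 := by
      have := Real.rpow_nonneg (le_of_lt (hSpos θ hθIcc)) (2/p-2)
      have h2p : (0:ℝ) ≤ 2 - p := by linarith
      positivity
    rw [hf''def]
    linarith
  -- assemble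
  have hmain : ConvexOn ℝ (Set.Icc (0:ℝ) 1)
      (fun θ : ℝ => Freg p (fun i => x i + θ * v i) - (k0 + k1 * θ + c * θ^2/2)) := by
    refine convexOn_of_hasDerivWithinAt2_nonneg (f' := f') (f'' := f'') (convex_Icc 0 1) ?_ ?_ ?_ ?_
    · have hcont : Continuous (fun θ : ℝ =>
          Freg p (fun i => x i + θ * v i) - (k0 + k1 * θ + c * θ^2/2)) := by
        refine Continuous.sub ?_ ((continuous_const.add (continuous_const.mul continuous_id)).add
          ((continuous_const.mul (continuous_pow 2)).div_const 2))
        exact (continuous_Freg hp0).comp (continuous_pi fun i =>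
          continuous_const.add (continuous_id.mul continuous_const))
      exact hcont.continuousOn
    · intro θ hθ
      rw [interior_Icc] at hθ
      have hθIcc : θ ∈ Set.Icc (0:ℝ) 1 := Set.mem_Icc.2 ⟨hθ.1.le, hθ.2.le⟩
      have h := ((hfSD θ hθIcc).hasDerivWithinAt (s := interior (Set.Icc (0:ℝ) 1)))
      refine h.congr (fun t ht => ?_) ?_
      · rw [interior_Icc] at ht
        rw [hEq t (Set.mem_Icc.2 ⟨ht.1.le, ht.2.le⟩)]
      · rw [hEq θ hθIcc]
    · intro θ hθ
      rw [interior_Icc] at hθ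
      exact (hf'D θ hθ).hasDerivWithinAt
    · intro θ hθ
      rw [interior_Icc] at hθ
      exact hf''nn θ hθ
  exact hmain

def ip (u v : Fin d → ℝ) : ℝ := ∑ i, u i * v i

lemma isMaxOn_strong {p : ℝ} (hp1 : 1 < p) (hp2 : p < 2) (u : Fin d → ℝ) {z : Fin d → ℝ}
    (hz : z ∈ stdSimplex ℝ (Fin d))
    (hmax : IsMaxOn (fun w => ip u w - Freg p w) (stdSimplex ℝ (Fin d)) z)
    {y : Fin d → ℝ} (hy : y ∈ stdSimplex ℝ (Fin d)) :
    ip u y - Freg p y + (p-1)/2 * Np2 p (fun i => y i - z i) ≤ ip u z - Freg p z := by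
  set c : ℝ := (p-1) * Np2 p (fun i => y i - z i) with hcdef
  have hc0 : 0 ≤ c := mul_nonneg (by linarith) (Real.rpow_nonneg (Finset.sum_nonneg
    fun i _ => Real.rpow_nonneg (abs_nonneg _) _) _)
  set k0 : ℝ := ip u z with hk0
  set k1 : ℝ := ip u y - ip u z with hk1
  set M : ℝ := ip u z - Freg p z with hM
  have hconv := convex_core hp1 hp2 hz hy k0 k1
  have hipθ : ∀ θ : ℝ, ip u (fun i => z i + θ * (y i - z i)) = k0 + k1 * θ := by
    intro θ
    have he : ∀ i ∈ Finset.univ, u i * (z i + θ * (y i - z i))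
        = u i * z i + θ * (u i * y i - u i * z i) := fun i _ => by ring
    rw [ip, Finset.sum_congr rfl he, Finset.sum_add_distrib, ← Finset.mul_sum,
      Finset.sum_sub_distrib]
    simp only [hk0, hk1, ip]
    ring
  have hmem : ∀ θ : ℝ, 0 ≤ θ → θ ≤ 1 →
      (fun i => z i + θ * (y i - z i)) ∈ stdSimplex ℝ (Fin d) := by
    intro θ h0 h1
    have h := (convex_stdSimplex ℝ (Fin d)) hz hy (by linarith : (0:ℝ) ≤ 1-θ) h0 (by ring)
    have heq : (fun i => z i + θ * (y i - z i)) = (1-θ) • z + θ • y := by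
      funext i; simp [Pi.smul_apply, smul_eq_mul]; ring
    rw [heq]; exact h
  have hfun0 : (fun i => z i + (0:ℝ) * (y i - z i)) = z := by funext i; ring
  have hfun1 : (fun i => z i + (1:ℝ) * (y i - z i)) = y := by funext i; ring
  have key : ∀ θ : ℝ, 0 < θ → θ ≤ 1 → ip u y - Freg p y + c/2 ≤ M + c * θ / 2 := by
    intro θ h0 h1
    have hcc := hconv.2 (Set.mem_Icc.2 ⟨le_refl (0:ℝ), zero_le_one⟩)
      (Set.mem_Icc.2 ⟨zero_le_one, le_refl (1:ℝ)⟩)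
      (by linarith : (0:ℝ) ≤ 1 - θ) h0.le (by ring)
    rw [show (1-θ) • (0:ℝ) + θ • (1:ℝ) = θ by simp [smul_eq_mul]] at hcc
    simp only [hfun0, hfun1] at hcc
    -- hcc : Freg (zθ) - (k0 + k1 θ + c θ²/2) ≤ (1-θ)(Freg z - (k0 + 0 + 0)) + θ (Freg y - (k0+k1+c/2))
    have hmx := hmax (hmem θ h0.le h1)
    simp only [Set.mem_setOf_eq] at hmx
    -- hmx : ip u zθ - Freg p zθ ≤ ip u z - Freg p z
    rw [hipθ θ] at hmx
    simp only [smul_eq_mul, ← hcdef] at hcc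
    have hstep : θ * (ip u y - Freg p y + c/2 - M) ≤ θ * (c * θ / 2) := by
      nlinarith [hmx, hcc]
    have hdiv := (mul_le_mul_iff_right₀ h0).1 hstep
    linarith
  by_contra hcon
  push_neg at hcon
  set ε : ℝ := ip u y - Freg p y + c/2 - M with hε
  have hε0 : 0 < ε := by simp only [hε]; linarith
  have hθ1 : (0:ℝ) < min 1 (ε/(c+1)) := lt_min one_pos (by positivity)
  have := key (min 1 (ε/(c+1))) hθ1 (min_le_left _ _)
  have hle : c * min 1 (ε/(c+1)) ≤ c * (ε/(c+1)) := by
    exact mul_le_mul_of_nonneg_left (min_le_right _ _) hc0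
  have hlt : c * (ε/(c+1)) < 2 * ε := by
    rw [mul_div_assoc']
    rw [div_lt_iff₀ (by linarith : (0:ℝ) < c+1)]
    nlinarith
  simp only [hε] at this hlt hle
  linarith


lemma sump_nonneg (p : ℝ) (v : Fin d → ℝ) : 0 ≤ sump p v :=
  Finset.sum_nonneg fun i _ => Real.rpow_nonneg (abs_nonneg _) _

lemma ip_le {pp qq : ℝ} (hpq : Real.HolderConjugate qq pp) (u w : Fin d → ℝ) :
    ip u w ≤ (sump qq u) ^ (1/qq) * (sump pp w) ^ (1/pp) := by
  simpa [ip, sump] using Real.inner_le_Lp_mul_Lq Finset.univ u w hpq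

lemma ip_sub (u a b : Fin d → ℝ) : ip u (fun i => a i - b i) = ip u a - ip u b := by
  simp [ip, mul_sub, Finset.sum_sub_distrib]

lemma continuous_ip (u : Fin d → ℝ) : Continuous (fun v => ip u v) := by
  refine continuous_finset_sum _ fun i _ => ?_
  exact continuous_const.mul (continuous_apply i)

lemma exists_max {p : ℝ} (hp1 : 1 < p) (hd : 1 ≤ d) (u : Fin d → ℝ) :
    ∃ z ∈ stdSimplex ℝ (Fin d), IsMaxOn (fun v => ip u v - Freg p v) (stdSimplex ℝ (Fin d)) z := by
  have hne : (stdSimplex ℝ (Fin d)).Nonempty := by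
    have : Nonempty (Fin d) := ⟨⟨0, hd⟩⟩
    exact ⟨_, ite_eq_mem_stdSimplex ℝ (Classical.arbitrary (Fin d))⟩
  exact isCompact_stdSimplex ℝ _ |>.exists_isMaxOn hne
    ((continuous_ip u).sub (continuous_Freg (by linarith))).continuousOn

lemma Freg_nonneg (p : ℝ) (v : Fin d → ℝ) : 0 ≤ Freg p v :=
  div_nonneg (Real.rpow_nonneg (Finset.sum_nonneg
    fun i _ => Real.rpow_nonneg (abs_nonneg _) _) _) (by norm_num)

lemma Freg_single {p : ℝ} (hp0 : p ≠ 0) (i : Fin d) :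
    Freg p (fun j => if i = j then (1:ℝ) else 0) = 1/2 := by
  have h1 : sump p (fun j => if i = j then (1:ℝ) else 0) = 1 := by
    rw [sump]
    rw [Finset.sum_congr rfl (fun j _ => show |if i = j then (1:ℝ) else 0| ^ p
      = if i = j then 1 else 0 from ?_)]
    · simp
    · by_cases h : i = j <;> simp [h, Real.zero_rpow hp0]
  rw [Freg, Np2, h1, Real.one_rpow]

lemma ip_single (u : Fin d → ℝ) (i : Fin d) :
    ip u (fun j => if i = j then (1:ℝ) else 0) = u i := by
  rw [ip]
  rw [Finset.sum_congr rfl (fun j _ => show u j * (if i = j then (1:ℝ) else 0)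
    = if i = j then u j else 0 from by by_cases h : i = j <;> simp [h])]
  simp

end OMDaux

lemma sump_sparse {d s : ℕ} {qq : ℝ} (hq : 0 < qq) {g : Fin d → ℝ}
    (h1 : InCube g) (h2 : IsSparse s g) : OMDaux.sump qq g ≤ (s : ℝ) := by
  classical
  have hJ : {i | g i ≠ 0}.toFinset = Finset.univ.filter (fun i => g i ≠ 0) := by
    ext i; simp
  have hcard : (Finset.univ.filter (fun i => g i ≠ 0)).card ≤ s := by
    have h := h2
    rw [IsSparse, supp0, Set.ncard_eq_toFinset_card'] at h
    rwa [hJ] at h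
  calc OMDaux.sump qq g = ∑ i ∈ Finset.univ.filter (fun i => g i ≠ 0), |g i| ^ qq := by
        rw [OMDaux.sump]
        refine (Finset.sum_subset (Finset.filter_subset _ _) fun i _ hi => ?_).symm
        simp only [Finset.mem_filter, Finset.mem_univ, true_and, not_not] at hi
        rw [hi, abs_zero, Real.zero_rpow hq.ne']
    _ ≤ ∑ i ∈ Finset.univ.filter (fun i => g i ≠ 0), 1 := by
        refine Finset.sum_le_sum fun i _ => ?_
        refine Real.rpow_le_one (abs_nonneg _) ?_ hq.le
        rw [abs_le]; exact ⟨by linarith [(h1 i).1], (h1 i).2⟩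
    _ = ((Finset.univ.filter (fun i => g i ≠ 0)).card : ℝ) := by simp
    _ ≤ (s : ℝ) := by exact_mod_cast hcard


/-- For `3 ≤ s ≤ d`, Online Mirror Descent with the tuned `ℓ^p` regularizer
guarantees `R_T ≤ √(2 e T log s)` against `s`-sparse gains in `[0,1]^d`. -/
theorem omd_sparse_gains_log_bound (d s T : ℕ) (hd : 1 ≤ d) (hs : 3 ≤ s) (hsd : s ≤ d)
    (hT : 1 ≤ T) :
    ∃ σ : ∀ t : ℕ, (Fin t → (Fin d → ℝ)) → (Fin d → ℝ), IsStrategy σ ∧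
      ∀ g : ℕ → Fin d → ℝ, (∀ t, InCube (g t) ∧ IsSparse s (g t)) →
        gainRegret σ g T ≤ Real.sqrt (2 * Real.exp 1 * T * Real.log s) := by
  classical
  have hscast : (3:ℝ) ≤ (s:ℝ) := by exact_mod_cast hs
  have hspos : (0:ℝ) < (s:ℝ) := by linarith
  have hTpos : (0:ℝ) < (T:ℝ) := by exact_mod_cast hT
  set L : ℝ := Real.log s with hLdef
  have hL1 : 1 < L := by
    rw [hLdef]
    have h3 : Real.exp 1 < 3 := by
      calc Real.exp 1 < 2.7182818286 := Real.exp_one_lt_d9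
        _ < 3 := by norm_num
    calc (1:ℝ) < Real.log 3 := by
          rw [Real.lt_log_iff_exp_lt (by norm_num)]; exact h3
      _ ≤ Real.log s := Real.log_le_log (by norm_num) hscast
  set q : ℝ := 2 * L with hqdef
  set p : ℝ := q / (q - 1) with hpdef
  have hq2 : 2 < q := by rw [hqdef]; linarith
  have hq1 : (1:ℝ) < q - 1 := by linarith
  have hq1pos : (0:ℝ) < q - 1 := by linarith
  have hp1 : 1 < p := by
    rw [hpdef, lt_div_iff₀ hq1pos]; linarith
  have hp2 : p < 2 := by
    rw [hpdef, div_lt_iff₀ hq1pos]; linarith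
  have hpm1 : p - 1 = 1 / (q - 1) := by
    rw [hpdef]; field_simp; ring
  have hpq : Real.HolderConjugate q p := by
    refine Real.holderConjugate_iff.mpr ⟨?_, ?_⟩
    · linarith
    · rw [hpdef, inv_div]
      field_simp
      ring
  set R0 : ℝ := Real.sqrt ((T:ℝ) * Real.exp 1 * (q - 1)) with hR0def
  have hR0pos : 0 < R0 := Real.sqrt_pos.2 (by positivity)
  set η : ℝ := 1 / R0 with hηdef
  have hηpos : 0 < η := by positivity
  refine ⟨fun t h => Classical.choose (OMDaux.exists_max hp1 hd (fun i => η * ∑ k, h k i)),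
    ?_, ?_⟩
  · intro t h
    have spec := Classical.choose_spec (OMDaux.exists_max hp1 hd (fun i => η * ∑ k, h k i))
    exact ⟨spec.1.1, spec.1.2⟩
  intro g hg
  -- setup
  set G : ℕ → Fin d → ℝ := fun t i => ∑ k ∈ Finset.range t, g k i with hGdef
  set uu : ℕ → Fin d → ℝ := fun t i => η * G t i with huudef
  set X : ℕ → Fin d → ℝ := fun t => Classical.choose (OMDaux.exists_max hp1 hd (uu t)) with hXdef
  have hXspec : ∀ t, X t ∈ stdSimplex ℝ (Fin d) ∧
      IsMaxOn (fun v => OMDaux.ip (uu t) v - OMDaux.Freg p v) (stdSimplex ℝ (Fin d)) (X t) :=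
    fun t => Classical.choose_spec (OMDaux.exists_max hp1 hd (uu t))
  have hplay : ∀ t, play (fun t h =>
      Classical.choose (OMDaux.exists_max hp1 hd (fun i => η * ∑ k, h k i))) g t = X t := by
    intro t
    show Classical.choose (OMDaux.exists_max hp1 hd (fun i => η * ∑ k : Fin t, g k i)) = X t
    rw [hXdef]
    refine congrArg (fun f : Fin d → ℝ => Classical.choose (OMDaux.exists_max hp1 hd f)) ?_
    funext i
    rw [Fin.sum_univ_eq_sum_range (fun k => g k i) t]
  have hLne : L ≠ 0 := by linarith
  have hepos := Real.exp_pos 1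
  have hR0sq : R0^2 = (T:ℝ) * Real.exp 1 * (q-1) := Real.sq_sqrt (by positivity)
  -- objective linearity
  have hiplin : ∀ (n : ℕ) (w : Fin d → ℝ),
      OMDaux.ip (uu (n+1)) w = OMDaux.ip (uu n) w + η * OMDaux.ip (g n) w := by
    intro n w
    have h1 : ∀ i ∈ Finset.univ, uu (n+1) i * w i = uu n i * w i + η * (g n i * w i) := by
      intro i _
      simp only [huudef, hGdef, Finset.sum_range_succ]; ring
    simp only [OMDaux.ip]
    rw [Finset.sum_congr rfl h1, Finset.sum_add_distrib, ← Finset.mul_sum]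
  -- be-the-leader with stability slack
  have hBTL : ∀ n : ℕ,
      (OMDaux.ip (uu n) (X n) - OMDaux.Freg p (X n)) +
        ∑ t ∈ Finset.range n, (p-1)/2 * OMDaux.Np2 p (fun i => X (t+1) i - X t i)
      ≤ (∑ t ∈ Finset.range n, η * OMDaux.ip (g t) (X (t+1))) - OMDaux.Freg p (X 0) := by
    intro n
    induction n with
    | zero =>
      simp only [Finset.range_zero, Finset.sum_empty, add_zero]
      have h0 : OMDaux.ip (uu 0) (X 0) = 0 := by
        simp [OMDaux.ip, huudef, hGdef]
      rw [h0]
    | succ n ih =>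
      have hkey := OMDaux.isMaxOn_strong hp1 hp2 (uu n) (hXspec n).1 (hXspec n).2
        (hXspec (n+1)).1
      rw [Finset.sum_range_succ, Finset.sum_range_succ]
      have hlin := hiplin n (X (n+1))
      linarith [ih, hkey, hlin]
  -- per-step stability bound
  have hstep : ∀ t : ℕ, η * OMDaux.ip (g t) (X (t+1)) - η * OMDaux.ip (g t) (X t)
      - (p-1)/2 * OMDaux.Np2 p (fun i => X (t+1) i - X t i)
      ≤ η^2 * Real.exp 1 * (q-1) / 2 := by
    intro t
    set Δ : Fin d → ℝ := fun i => X (t+1) i - X t i with hΔdef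
    have hsub : OMDaux.ip (g t) (X (t+1)) - OMDaux.ip (g t) (X t) = OMDaux.ip (g t) Δ :=
      (OMDaux.ip_sub (g t) (X (t+1)) (X t)).symm
    set a : ℝ := (OMDaux.sump q (g t)) ^ (1/q) with hadef
    set r : ℝ := (OMDaux.sump p Δ) ^ (1/p) with hrdef
    have hipΔ : OMDaux.ip (g t) Δ ≤ a * r := OMDaux.ip_le hpq (g t) Δ
    have ha0 : 0 ≤ a := Real.rpow_nonneg (OMDaux.sump_nonneg _ _) _
    have hr0 : 0 ≤ r := Real.rpow_nonneg (OMDaux.sump_nonneg _ _) _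
    have hNp2r : OMDaux.Np2 p Δ = r^2 := by
      rw [OMDaux.Np2, hrdef, ← Real.rpow_natCast ((OMDaux.sump p Δ) ^ (1/p)) 2,
        ← Real.rpow_mul (OMDaux.sump_nonneg _ _)]
      norm_num
      rw [show p⁻¹ * 2 = 2/p by ring]
    have ha2 : a^2 ≤ Real.exp 1 := by
      have h1 : a^2 = (OMDaux.sump q (g t)) ^ (2/q) := by
        rw [hadef, ← Real.rpow_natCast ((OMDaux.sump q (g t)) ^ (1/q)) 2,
          ← Real.rpow_mul (OMDaux.sump_nonneg _ _)]
        norm_num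
        rw [show q⁻¹ * 2 = 2/q by ring]
      have h2 : (OMDaux.sump q (g t)) ^ (2/q) ≤ (s:ℝ) ^ (2/q) :=
        Real.rpow_le_rpow (OMDaux.sump_nonneg _ _)
          (sump_sparse (by linarith) (hg t).1 (hg t).2) (by positivity)
      have h3 : (s:ℝ) ^ (2/q) = Real.exp 1 := by
        rw [Real.rpow_def_of_pos hspos]
        rw [show Real.log s = L from rfl]
        congr 1
        rw [hqdef]
        field_simp
      rw [h1]; rw [h3] at h2; exact h2
    have hAMGM : η * (a * r) - (p-1)/2 * r^2 ≤ η^2 * Real.exp 1 * (q-1)/2 := by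
      rw [hpm1]
      have key : (q-1) * (η * (a * r) - (1/(q-1))/2 * r^2)
          ≤ (q-1) * (η^2 * Real.exp 1 * (q-1)/2) := by
        have hexpand : (q-1) * (η * (a * r) - (1/(q-1))/2 * r^2)
            = (q-1)*η*a*r - r^2/2 := by field_simp
        rw [hexpand]
        nlinarith [sq_nonneg (η*a*(q-1) - r),
          mul_le_mul_of_nonneg_left ha2 (by positivity : (0:ℝ) ≤ η^2*(q-1)^2)]
      exact (mul_le_mul_iff_right₀ hq1pos).1 key
    calc η * OMDaux.ip (g t) (X (t+1)) - η * OMDaux.ip (g t) (X t)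
          - (p-1)/2 * OMDaux.Np2 p Δ
        = η * OMDaux.ip (g t) Δ - (p-1)/2 * r^2 := by rw [← hsub, hNp2r]; ring
      _ ≤ η * (a * r) - (p-1)/2 * r^2 := by
          nlinarith [mul_le_mul_of_nonneg_left hipΔ hηpos.le]
      _ ≤ _ := hAMGM
  -- per-expert regret bound
  have hexpert : ∀ i : Fin d,
      G T i - ∑ t ∈ Finset.range T, OMDaux.ip (g t) (X t) ≤ R0 := by
    intro i
    have he := OMDaux.ip_single (uu T) i
    have hFe := OMDaux.Freg_single (d := d) (show p ≠ 0 by linarith) i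
    have hmaxe := (hXspec T).2 (ite_eq_mem_stdSimplex ℝ i)
    simp only [Set.mem_setOf_eq] at hmaxe
    -- hmaxe : ip (uu T) e - Freg p e ≤ ip (uu T) (X T) - Freg p (X T)
    rw [he, hFe] at hmaxe
    have huuT : uu T i = η * G T i := rfl
    rw [huuT] at hmaxe
    have hB := hBTL T
    have hsumstep : ∑ t ∈ Finset.range T,
        (η * OMDaux.ip (g t) (X (t+1)) - η * OMDaux.ip (g t) (X t)
          - (p-1)/2 * OMDaux.Np2 p (fun i => X (t+1) i - X t i))
        ≤ (T:ℝ) * (η^2 * Real.exp 1 * (q-1)/2) := by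
      calc _ ≤ ∑ _t ∈ Finset.range T, η^2 * Real.exp 1 * (q-1)/2 :=
            Finset.sum_le_sum (fun t _ => hstep t)
        _ = (T:ℝ) * (η^2 * Real.exp 1 * (q-1)/2) := by
            rw [Finset.sum_const, Finset.card_range, nsmul_eq_mul]
    have hsplit : ∑ t ∈ Finset.range T,
        (η * OMDaux.ip (g t) (X (t+1)) - η * OMDaux.ip (g t) (X t)
          - (p-1)/2 * OMDaux.Np2 p (fun i => X (t+1) i - X t i))
        = (∑ t ∈ Finset.range T, η * OMDaux.ip (g t) (X (t+1)))
          - (∑ t ∈ Finset.range T, η * OMDaux.ip (g t) (X t))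
          - ∑ t ∈ Finset.range T, (p-1)/2 * OMDaux.Np2 p (fun i => X (t+1) i - X t i) := by
      rw [← Finset.sum_sub_distrib, ← Finset.sum_sub_distrib]
    have hFnn := OMDaux.Freg_nonneg p (X 0)
    have hηsum : ∑ t ∈ Finset.range T, η * OMDaux.ip (g t) (X t)
        = η * ∑ t ∈ Finset.range T, OMDaux.ip (g t) (X t) := by
      rw [Finset.mul_sum]
    -- combine: η * G T i - 1/2 ≤ stuff
    have hcomb : η * (G T i - ∑ t ∈ Finset.range T, OMDaux.ip (g t) (X t))
        ≤ 1/2 + (T:ℝ) * (η^2 * Real.exp 1 * (q-1)/2) := by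
      rw [mul_sub, ← hηsum]
      linarith [hmaxe, hB, hsumstep, hsplit ▸ hsumstep]
    -- divide by η
    have hη2 : η^2 * Real.exp 1 * (q-1) * T = 1 := by
      rw [hηdef, div_pow, one_pow, hR0sq]
      field_simp
    have hhalf : (T:ℝ) * (η^2 * Real.exp 1 * (q-1)/2) = 1/2 := by
      linear_combination hη2 / 2
    rw [hhalf] at hcomb
    -- η * Z ≤ 1 → Z ≤ 1/η = R0
    have hZ : G T i - ∑ t ∈ Finset.range T, OMDaux.ip (g t) (X t) ≤ 1/η := by
      rw [le_div_iff₀ hηpos]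
      linarith [hcomb]
    rw [hηdef, one_div_one_div] at hZ
    exact hZ
  -- final numeric comparison
  have hR0le : R0 ≤ Real.sqrt (2 * Real.exp 1 * T * Real.log s) := by
    rw [hR0def]
    apply Real.sqrt_le_sqrt
    rw [show Real.log s = L from rfl, hqdef]
    nlinarith [mul_pos hTpos hepos]
  -- conclude
  haveI : Nonempty (Fin d) := ⟨⟨0, hd⟩⟩
  rw [gainRegret, sub_le_iff_le_add]
  refine ciSup_le fun i => ?_
  have hplayeq : ∑ t ∈ Finset.range T, ∑ j, g t j * play (fun t h =>
      Classical.choose (OMDaux.exists_max hp1 hd (fun i => η * ∑ k, h k i))) g t j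
      = ∑ t ∈ Finset.range T, OMDaux.ip (g t) (X t) := by
    refine Finset.sum_congr rfl fun t _ => ?_
    rw [hplay t]
    rfl
  rw [hplayeq]
  have hGi : ∑ t ∈ Finset.range T, g t i = G T i := rfl
  rw [hGi]
  linarith [hexpert i, hR0le]

end
end

section
/- Let d ≥ 1, s an integer with 1 ≤ s ≤ 2 and s ≤ d, and T ≥ 1. There exists a full-information strategy (Online Mirror Descent with the Euclidean regularizer h_2(x) = ½‖x‖_2² on Δ_d, suitably tuned) such that for every sequence g_1,…,g_T of s-sparse gain vectors in [0,1]^d, the regret satisfies R_T ≤ √(sT). -/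
open Finset Filter MeasureTheory ProbabilityTheory Real
open scoped RealInnerProductSpace

noncomputable section

namespace OMDAux

abbrev E (d : ℕ) := EuclideanSpace ℝ (Fin d)

def Kset (d : ℕ) : Set (E d) := {x | (∀ i, 0 ≤ x i) ∧ ∑ i, x i = 1}

def coeE {d : ℕ} (v : Fin d → ℝ) : E d := (WithLp.equiv 2 (Fin d → ℝ)).symm v

@[simp] lemma coeE_apply {d : ℕ} (v : Fin d → ℝ) (i : Fin d) : coeE v i = v i := rfl

lemma norm_sq_eq {d : ℕ} (x : E d) : ‖x‖^2 = ∑ i, (x i)^2 := by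
  rw [EuclideanSpace.norm_eq, Real.sq_sqrt (by positivity)]
  simp [sq_abs]

lemma inner_eq {d : ℕ} (v w : E d) : ⟪v, w⟫ = ∑ i, v i * w i := by
  simp [PiLp.inner_apply, RCLike.inner_apply, conj_trivial]
  exact Finset.sum_congr rfl fun i _ => mul_comm _ _

lemma convex_Kset (d : ℕ) : Convex ℝ (Kset d) := by
  intro x hx y hy a b ha hb hab
  refine ⟨fun i => ?_, ?_⟩
  · have h : (a • x + b • y) i = a * x i + b * y i := rfl
    rw [h]
    exact add_nonneg (mul_nonneg ha (hx.1 i)) (mul_nonneg hb (hy.1 i))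
  · have h : ∀ i, (a • x + b • y) i = a * x i + b * y i := fun i => rfl
    simp_rw [h]
    rw [Finset.sum_add_distrib, ← Finset.mul_sum, ← Finset.mul_sum, hx.2, hy.2]
    linarith

lemma isClosed_Kset (d : ℕ) : IsClosed (Kset d) := by
  have h1 : IsClosed {x : E d | ∀ i, 0 ≤ x i} := by
    have : {x : E d | ∀ i, 0 ≤ x i} = ⋂ i, (fun x : E d => x i) ⁻¹' Set.Ici 0 := by
      ext x; simp [Set.mem_iInter]
    rw [this]
    exact isClosed_iInter fun i =>
      isClosed_Ici.preimage (EuclideanSpace.proj i).continuous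
  have h2 : IsClosed {x : E d | ∑ i, x i = 1} := by
    have : {x : E d | ∑ i, x i = 1} = (fun x : E d => ∑ i, x i) ⁻¹' {1} := rfl
    rw [this]
    exact isClosed_singleton.preimage
      (continuous_finset_sum _ fun i _ => (EuclideanSpace.proj i).continuous)
  exact (h1.inter h2 : _)

def unif (d : ℕ) : E d := coeE (fun _ => (d:ℝ)⁻¹)

lemma unif_mem {d : ℕ} (hd : 0 < d) : unif d ∈ Kset d := by
  refine ⟨fun i => show (0:ℝ) ≤ (d:ℝ)⁻¹ by positivity, ?_⟩
  have : ∀ i : Fin d, unif d i = (d:ℝ)⁻¹ := fun i => rfl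
  simp_rw [this]
  rw [Finset.sum_const, card_univ, Fintype.card_fin, nsmul_eq_mul]
  field_simp

lemma exists_proj {d : ℕ} (hd : 0 < d) (y : E d) :
    ∃ v ∈ Kset d, ∀ w ∈ Kset d, ⟪y - v, w - v⟫ ≤ 0 := by
  obtain ⟨v, hv, hmin⟩ := exists_norm_eq_iInf_of_complete_convex ⟨unif d, unif_mem hd⟩
    (isClosed_Kset d).isComplete (convex_Kset d) y
  exact ⟨v, hv, (norm_eq_iInf_iff_real_inner_le_zero (convex_Kset d) hv).1 hmin⟩

def proj {d : ℕ} (hd : 0 < d) (y : E d) : E d := (exists_proj hd y).choose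

lemma proj_spec {d : ℕ} (hd : 0 < d) (y : E d) :
    proj hd y ∈ Kset d ∧ ∀ w ∈ Kset d, ⟪y - proj hd y, w - proj hd y⟫ ≤ 0 :=
  (exists_proj hd y).choose_spec

lemma proj_dist_sq {d : ℕ} (hd : 0 < d) (y u : E d) (hu : u ∈ Kset d) :
    ‖proj hd y - u‖^2 ≤ ‖y - u‖^2 := by
  obtain ⟨hm, hi⟩ := proj_spec hd y
  have h := hi u hu
  have hexp : ‖y - u‖^2 = ‖y - proj hd y‖^2 + 2 * ⟪y - proj hd y, proj hd y - u⟫ + ‖proj hd y - u‖^2 := by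
    have : y - u = (y - proj hd y) + (proj hd y - u) := by abel
    rw [this, norm_add_sq_real]
  have hcross : 0 ≤ ⟪y - proj hd y, proj hd y - u⟫ := by
    have : proj hd y - u = -(u - proj hd y) := by abel
    rw [this, inner_neg_right]; linarith
  nlinarith [sq_nonneg ‖y - proj hd y‖]

def X {d : ℕ} (hd : 0 < d) (η : ℝ) : ∀ t : ℕ, (Fin t → (Fin d → ℝ)) → E d
  | 0, _ => unif d
  | (t+1), h => proj hd (X hd η t (fun k => h k.castSucc) + η • coeE (h (Fin.last t)))

lemma X_mem {d : ℕ} (hd : 0 < d) (η : ℝ) : ∀ t h, X hd η t h ∈ Kset d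
  | 0, _ => unif_mem hd
  | (t+1), _ => (proj_spec hd _).1

end OMDAux

/-- For `s ∈ {1,2}`, Online Mirror Descent with the Euclidean regularizer,
suitably tuned, guarantees `R_T ≤ √(sT)` against `s`-sparse gains in `[0,1]^d`. -/
theorem omd_sparse_gains_small_s (d s T : ℕ) (hd : 1 ≤ d) (hs1 : 1 ≤ s) (hs2 : s ≤ 2)
    (hsd : s ≤ d) (hT : 1 ≤ T) :
    ∃ σ : ∀ t : ℕ, (Fin t → (Fin d → ℝ)) → (Fin d → ℝ), IsStrategy σ ∧
      ∀ g : ℕ → Fin d → ℝ, (∀ t, InCube (g t) ∧ IsSparse s (g t)) →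
        gainRegret σ g T ≤ Real.sqrt (s * T) := by
  classical
  have hd0 : 0 < d := hd
  haveI : Nonempty (Fin d) := ⟨⟨0, hd0⟩⟩
  set A : ℝ := Real.sqrt (s * T) with hA
  have hsT1 : (1:ℝ) ≤ (s:ℝ) * (T:ℝ) := by
    have h1 : 1 * 1 ≤ s * T := Nat.mul_le_mul hs1 hT
    exact_mod_cast h1
  have hA2 : A^2 = (s:ℝ) * T := Real.sq_sqrt (by linarith)
  have hA1 : (1:ℝ) ≤ A := by
    rw [hA]
    exact Real.one_le_sqrt.mpr hsT1
  have hApos : (0:ℝ) < A := lt_of_lt_of_le one_pos hA1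
  set η : ℝ := A⁻¹ with hη
  have hηpos : 0 < η := inv_pos.2 hApos
  refine ⟨fun t h => OMDAux.X hd0 η t h, fun t h => ⟨(OMDAux.X_mem hd0 η t h).1,
    (OMDAux.X_mem hd0 η t h).2⟩, ?_⟩
  intro g hg
  set x : ℕ → OMDAux.E d := fun t => OMDAux.X hd0 η t (fun k : Fin t => g k) with hx
  have hxmem : ∀ t, x t ∈ OMDAux.Kset d := fun t => OMDAux.X_mem hd0 η t _
  set gE : ℕ → OMDAux.E d := fun t => OMDAux.coeE (g t) with hgE
  have hrec : ∀ t, x (t+1) = OMDAux.proj hd0 (x t + η • gE t) := fun t => rfl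
  -- norm of gains bounded by sparsity
  have gnorm : ∀ t, ‖gE t‖^2 ≤ (s:ℝ) := by
    intro t
    rw [OMDAux.norm_sq_eq]
    have hsub : ∀ i, (gE t i)^2 = (g t i)^2 := fun i => rfl
    simp_rw [hsub]
    have hfil : ∑ i ∈ Finset.univ.filter (fun i => g t i ≠ 0), (g t i)^2 = ∑ i, (g t i)^2 := by
      refine Finset.sum_filter_of_ne fun i _ h => ?_
      intro h0; exact h (by rw [h0]; ring)
    rw [← hfil]
    have hle1 : ∑ i ∈ Finset.univ.filter (fun i => g t i ≠ 0), (g t i)^2 ≤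
        ∑ _i ∈ Finset.univ.filter (fun i => g t i ≠ 0), (1:ℝ) := by
      refine Finset.sum_le_sum fun i _ => ?_
      have h1 := (hg t).1 i
      nlinarith [h1.1, h1.2]
    have hcard : ((Finset.univ.filter (fun i => g t i ≠ 0)).card : ℝ) ≤ (s:ℝ) := by
      have hsp := (hg t).2
      rw [IsSparse, supp0, Set.ncard_eq_toFinset_card'] at hsp
      have : ({i | g t i ≠ 0} : Set (Fin d)).toFinset = Finset.univ.filter (fun i => g t i ≠ 0) := by
        ext i; simp
      rw [this] at hsp
      exact_mod_cast hsp
    rw [Finset.sum_const, nsmul_eq_mul, mul_one] at hle1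
    linarith
  -- initial distance bound
  have hx0 : ∀ u ∈ OMDAux.Kset d, ‖x 0 - u‖^2 ≤ 1 := by
    intro u hu
    have hub : ∀ i, u i ≤ 1 := by
      intro i
      have h1 := Finset.single_le_sum (f := fun j => u j) (fun j _ => hu.1 j) (Finset.mem_univ i)
      rw [hu.2] at h1; exact h1
    have husq : ∑ i, (u i)^2 ≤ 1 := by
      calc ∑ i, (u i)^2 ≤ ∑ i, u i :=
            Finset.sum_le_sum fun i _ => by nlinarith [hu.1 i, hub i]
        _ = 1 := hu.2
    rw [OMDAux.norm_sq_eq]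
    have happ : ∀ i, (x 0 - u) i = (d:ℝ)⁻¹ - u i := fun i => rfl
    simp_rw [happ]
    have hdpos : (0:ℝ) < d := by exact_mod_cast hd0
    have expand : ∀ i : Fin d, ((d:ℝ)⁻¹ - u i)^2 = ((d:ℝ)⁻¹)^2 - 2*(d:ℝ)⁻¹ * u i + (u i)^2 :=
      fun i => by ring
    simp_rw [expand]
    rw [Finset.sum_add_distrib, Finset.sum_sub_distrib, Finset.sum_const, ← Finset.mul_sum,
      hu.2, Finset.card_univ, Fintype.card_fin, nsmul_eq_mul]
    have hdd : (d:ℝ) * ((d:ℝ)⁻¹)^2 = (d:ℝ)⁻¹ := by field_simp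
    have hdinv : (0:ℝ) < (d:ℝ)⁻¹ := by positivity
    rw [hdd]
    linarith
  -- per-step inequality (multiplied by 2η)
  have step : ∀ u ∈ OMDAux.Kset d, ∀ t,
      (2*η) * (⟪gE t, u⟫ - ⟪gE t, x t⟫) ≤
        (‖x t - u‖^2 - ‖x (t+1) - u‖^2) + η^2 * s := by
    intro u hu t
    have h1 : ‖x (t+1) - u‖^2 ≤ ‖(x t + η • gE t) - u‖^2 := by
      rw [hrec t]; exact OMDAux.proj_dist_sq hd0 _ u hu
    have h2 : ‖(x t + η • gE t) - u‖^2
        = ‖x t - u‖^2 + 2*η*⟪x t - u, gE t⟫ + η^2 * ‖gE t‖^2 := by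
      have he : (x t + η • gE t) - u = (x t - u) + η • gE t := by abel
      rw [he, norm_add_sq_real, real_inner_smul_right, norm_smul]
      rw [Real.norm_eq_abs, mul_pow, sq_abs]
      ring
    have h3 : ⟪gE t, u⟫ - ⟪gE t, x t⟫ = -⟪x t - u, gE t⟫ := by
      rw [inner_sub_left, real_inner_comm (gE t) u, real_inner_comm (gE t) (x t)]
      ring
    have h4 := gnorm t
    have h6 : ‖x (t+1) - u‖^2 ≤ ‖x t - u‖^2 + 2*η*⟪x t - u, gE t⟫ + η^2 * ‖gE t‖^2 :=
      h2 ▸ h1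
    rw [h3]
    nlinarith [sq_nonneg η, mul_le_mul_of_nonneg_left h4 (sq_nonneg η)]
  -- summed bound
  have main : ∀ u ∈ OMDAux.Kset d,
      ∑ t ∈ Finset.range T, (⟪gE t, u⟫ - ⟪gE t, x t⟫) ≤ A := by
    intro u hu
    set S : ℝ := ∑ t ∈ Finset.range T, (⟪gE t, u⟫ - ⟪gE t, x t⟫) with hS
    have hsum : (2*η) * S ≤ (‖x 0 - u‖^2 - ‖x T - u‖^2) + T * (η^2 * s) := by
      rw [hS, Finset.mul_sum]
      calc ∑ t ∈ Finset.range T, (2*η) * (⟪gE t, u⟫ - ⟪gE t, x t⟫)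
          ≤ ∑ t ∈ Finset.range T, ((‖x t - u‖^2 - ‖x (t+1) - u‖^2) + η^2 * s) :=
            Finset.sum_le_sum fun t _ => step u hu t
        _ = (‖x 0 - u‖^2 - ‖x T - u‖^2) + T * (η^2 * s) := by
            rw [Finset.sum_add_distrib, Finset.sum_range_sub' (fun t => ‖x t - u‖^2),
              Finset.sum_const, Finset.card_range, nsmul_eq_mul]
    have h0 := hx0 u hu
    have hTb : (0:ℝ) ≤ ‖x T - u‖^2 := sq_nonneg _
    have e1 : (T:ℝ) * (η^2 * s) = 1 := by
      rw [hη]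
      field_simp
      rw [hA2]; ring
    have hS2 : S * (2*η) ≤ 2 := by
      rw [mul_comm]
      calc (2*η) * S ≤ (‖x 0 - u‖^2 - ‖x T - u‖^2) + T * (η^2 * s) := hsum
        _ ≤ 1 + 1 := by rw [e1]; linarith
        _ = 2 := by norm_num
    have h2ηpos : (0:ℝ) < 2*η := by linarith
    have : S ≤ 2 / (2*η) := (le_div_iff₀ h2ηpos).2 hS2
    have heq : 2 / (2*η) = A := by
      rw [hη]; field_simp
    linarith [heq ▸ this]
  -- best expert
  obtain ⟨i₀, hi₀⟩ := Finite.exists_max (fun i : Fin d => ∑ t ∈ Finset.range T, g t i)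
  set u : OMDAux.E d := OMDAux.coeE (fun j => if j = i₀ then 1 else 0) with hu_def
  have hu : u ∈ OMDAux.Kset d := by
    constructor
    · intro j
      have : u j = if j = i₀ then (1:ℝ) else 0 := rfl
      rw [this]; split <;> norm_num
    · have : ∀ j, u j = if j = i₀ then (1:ℝ) else 0 := fun j => rfl
      simp_rw [this]
      simp
  have hinner_u : ∀ t, ⟪gE t, u⟫ = g t i₀ := by
    intro t
    rw [OMDAux.inner_eq]
    have : ∀ j, gE t j * u j = if j = i₀ then g t j else 0 := by
      intro j
      have h1 : gE t j = g t j := rfl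
      have h2 : u j = if j = i₀ then (1:ℝ) else 0 := rfl
      rw [h1, h2]; split <;> simp
    simp_rw [this]
    simp
  have hinner_x : ∀ t, ∑ i, g t i * (OMDAux.X hd0 η t fun k : Fin t => g k) i
      = ⟪gE t, x t⟫ := by
    intro t
    rw [OMDAux.inner_eq]
    rfl
  have hsup : (⨆ i, ∑ t ∈ Finset.range T, g t i) ≤ ∑ t ∈ Finset.range T, g t i₀ :=
    ciSup_le hi₀
  rw [gainRegret]
  have hplay : ∀ t, ∑ i, g t i * play (fun t h => OMDAux.X hd0 η t h) g t i = ⟪gE t, x t⟫ :=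
    fun t => hinner_x t
  simp_rw [hplay]
  have hfin := main u hu
  rw [Finset.sum_sub_distrib] at hfin
  simp_rw [hinner_u] at hfin
  linarith

end
end

section
/- Let d ≥ 1, η > 0 and T ≥ 1. For every sequence of loss vectors ℓ_1,…,ℓ_T in [0,1]^d, the Exponential Weight Algorithm with parameter −η guarantees R_T ≤ (log d)/(1 − e^{−η}) + (η/(1 − e^{−η}) − 1) · L_T^*, where L_T^* = min_{i ∈ [d]} Σ_{t=1}^T ℓ_t^{(i)}. -/
open Finset Filter MeasureTheory ProbabilityTheory Real

noncomputable section

/-- Regret after `T` stages when outcomes are losses. -/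
def lossRegret {d : ℕ} (σ : ∀ t : ℕ, (Fin t → (Fin d → ℝ)) → (Fin d → ℝ))
    (ℓ : ℕ → Fin d → ℝ) (T : ℕ) : ℝ :=
  (∑ t ∈ Finset.range T, ∑ i, ℓ t i * play σ ℓ t i) -
    ⨅ i, ∑ t ∈ Finset.range T, ℓ t i

/-- The Exponential Weight Algorithm with parameter `-η`, viewed as a full-information
strategy: `x_t^{(i)} ∝ exp(-η ∑_{k<t} ℓ_k^{(i)})`. -/
def ewa (d : ℕ) (η : ℝ) : ∀ t : ℕ, (Fin t → (Fin d → ℝ)) → (Fin d → ℝ) :=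
  fun t h i => Real.exp (-η * ∑ k : Fin t, h k i) / ∑ j, Real.exp (-η * ∑ k : Fin t, h k j)

lemma exp_convex_bound (η x : ℝ) (hx : 0 ≤ x) (hx1 : x ≤ 1) :
    Real.exp (-η * x) ≤ 1 - (1 - Real.exp (-η)) * x := by
  have h := convexOn_exp.2 (Set.mem_univ (0:ℝ)) (Set.mem_univ (-η))
    (by linarith : (0:ℝ) ≤ 1 - x) hx (by ring)
  simp only [smul_eq_mul, mul_zero, zero_add, Real.exp_zero, mul_one] at h
  have : -η * x = x * -η := by ring
  rw [this]
  linarith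

/-- Regret bound for the Exponential Weight Algorithm with losses in
`[0,1]^d`, in terms of the best cumulative loss `L_T^*`. -/
theorem ewa_small_loss_bound (d T : ℕ) (hd : 1 ≤ d) (hT : 1 ≤ T) (η : ℝ) (hη : 0 < η)
    (ℓ : ℕ → Fin d → ℝ) (hℓ : ∀ t, InCube (ℓ t)) :
    lossRegret (ewa d η) ℓ T ≤
      Real.log d / (1 - Real.exp (-η)) +
        (η / (1 - Real.exp (-η)) - 1) * ⨅ i, ∑ t ∈ Finset.range T, ℓ t i := by
  simp only [lossRegret]
  have hℓ : ∀ t, ∀ i, ℓ t i ∈ Set.Icc (0:ℝ) 1 := fun t => hℓ t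
  have hdpos : 0 < d := hd
  have hne : Nonempty (Fin d) := ⟨⟨0, hdpos⟩⟩
  set c := 1 - Real.exp (-η) with hc
  have hc0 : 0 < c := by
    have : Real.exp (-η) < 1 := Real.exp_lt_one_iff.mpr (by linarith)
    simp only [hc]; linarith
  set L : ℕ → Fin d → ℝ := fun t i => ∑ k ∈ Finset.range t, ℓ k i with hLdef
  set W : ℕ → ℝ := fun t => ∑ j, Real.exp (-η * L t j) with hWdef
  have hWpos : ∀ t, 0 < W t := fun t =>
    Finset.sum_pos (fun j _ => Real.exp_pos _) Finset.univ_nonempty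
  -- the played action
  have hplay : ∀ t i, play (ewa d η) ℓ t i = Real.exp (-η * L t i) / W t := by
    intro t i
    simp only [play, ewa, hWdef, hLdef]
    congr 1
    · congr 1
      exact congrArg (fun z => -η * z) (Fin.sum_univ_eq_sum_range (fun k => ℓ k i) t)
    · refine Finset.sum_congr rfl fun j _ => ?_
      exact congrArg (fun z => Real.exp (-η * z)) (Fin.sum_univ_eq_sum_range (fun k => ℓ k j) t)
  set s : ℕ → ℝ := fun t => ∑ i, ℓ t i * play (ewa d η) ℓ t i with hsdef
  have hs0 : ∀ t, 0 ≤ s t := by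
    intro t
    refine Finset.sum_nonneg fun i _ => mul_nonneg (hℓ t i).1 ?_
    rw [hplay]
    positivity
  have hs1 : ∀ t, s t ≤ 1 := by
    intro t
    have hsum : ∑ i, play (ewa d η) ℓ t i = 1 := by
      simp only [hplay]
      rw [← Finset.sum_div]
      exact div_self (hWpos t).ne'
    calc s t ≤ ∑ i, play (ewa d η) ℓ t i := by
          refine Finset.sum_le_sum fun i _ => ?_
          have hp : 0 ≤ play (ewa d η) ℓ t i := by rw [hplay]; positivity
          nlinarith [(hℓ t i).2, (hℓ t i).1]
      _ = 1 := hsum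
  -- one-step inequality
  have hstep : ∀ t, W (t + 1) ≤ W t * (1 - c * s t) := by
    intro t
    have h1 : W (t + 1) = ∑ j, Real.exp (-η * L t j) * Real.exp (-η * ℓ t j) := by
      simp only [hWdef]
      refine Finset.sum_congr rfl fun j _ => ?_
      rw [← Real.exp_add]
      congr 1
      simp only [hLdef, Finset.sum_range_succ]
      ring
    have h2 : ∑ j, Real.exp (-η * L t j) * Real.exp (-η * ℓ t j)
        ≤ ∑ j, Real.exp (-η * L t j) * (1 - c * ℓ t j) := by
      refine Finset.sum_le_sum fun j _ => ?_
      exact mul_le_mul_of_nonneg_left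
        (exp_convex_bound η (ℓ t j) (hℓ t j).1 (hℓ t j).2) (Real.exp_pos _).le
    have h3 : ∑ j, Real.exp (-η * L t j) * (1 - c * ℓ t j) = W t * (1 - c * s t) := by
      have hsW : s t * W t = ∑ j, Real.exp (-η * L t j) * ℓ t j := by
        simp only [hsdef, hplay, Finset.sum_mul]
        refine Finset.sum_congr rfl fun j _ => ?_
        field_simp
        exact mul_div_cancel_right₀ _ (hWpos t).ne'
      have : ∑ j, Real.exp (-η * L t j) * (1 - c * ℓ t j)
          = W t - c * (∑ j, Real.exp (-η * L t j) * ℓ t j) := by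
        simp only [hWdef, Finset.mul_sum]
        rw [← Finset.sum_sub_distrib]
        exact Finset.sum_congr rfl fun j _ => by ring
      rw [this, ← hsW]; ring
    calc W (t + 1) = _ := h1
      _ ≤ _ := h2
      _ = _ := h3
  -- positivity of 1 - c * s t
  have hpos : ∀ t, 0 < 1 - c * s t := by
    intro t
    have : c * s t ≤ c * 1 := mul_le_mul_of_nonneg_left (hs1 t) hc0.le
    have hce : c = 1 - Real.exp (-η) := hc
    nlinarith [Real.exp_pos (-η)]
  -- log step and telescoping
  have hlog : ∀ n, Real.log (W n) ≤ Real.log (W 0) - c * ∑ t ∈ Finset.range n, s t := by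
    intro n
    induction n with
    | zero => simp
    | succ n ih =>
      have h1 : Real.log (W (n + 1)) ≤ Real.log (W n * (1 - c * s n)) :=
        Real.log_le_log (hWpos (n + 1)) (hstep n)
      rw [Real.log_mul (hWpos n).ne' (hpos n).ne'] at h1
      have h2 : Real.log (1 - c * s n) ≤ -(c * s n) := by
        have := Real.log_le_sub_one_of_pos (hpos n)
        linarith
      rw [Finset.sum_range_succ]
      linarith
  have hW0 : Real.log (W 0) = Real.log d := by
    have : W 0 = d := by
      simp [hWdef, hLdef]
    rw [this]
  -- the minimizer
  obtain ⟨i0, hi0⟩ := Finite.exists_min (fun i : Fin d => ∑ t ∈ Finset.range T, ℓ t i)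
  set Lstar : ℝ := ⨅ i, ∑ t ∈ Finset.range T, ℓ t i with hLstar
  have hLstar_eq : Lstar = ∑ t ∈ Finset.range T, ℓ t i0 := by
    refine le_antisymm (ciInf_le (Set.finite_range _).bddBelow i0) (le_ciInf hi0)
  have hlower : -η * Lstar ≤ Real.log (W T) := by
    have h1 : Real.exp (-η * Lstar) ≤ W T := by
      have : Real.exp (-η * Lstar) = Real.exp (-η * L T i0) := by
        rw [hLstar_eq]
      rw [this]
      simp only [hWdef]
      exact Finset.single_le_sum (f := fun j => Real.exp (-η * L T j)) (fun j _ => (Real.exp_pos _).le) (Finset.mem_univ i0)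
    calc -η * Lstar = Real.log (Real.exp (-η * Lstar)) := (Real.log_exp _).symm
      _ ≤ Real.log (W T) := Real.log_le_log (Real.exp_pos _) h1
  -- combine
  set S : ℝ := ∑ t ∈ Finset.range T, s t with hSdef
  have hkey : c * S ≤ Real.log d + η * Lstar := by
    have := hlog T
    rw [hW0] at this
    nlinarith [hlower]
  have hSle : S ≤ (Real.log d + η * Lstar) / c := by
    rw [le_div_iff₀ hc0]
    linarith [hkey]
  have heq : (Real.log d + η * Lstar) / c - Lstar
      = Real.log d / c + (η / c - 1) * Lstar := by
    field_simp
    ring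
  have : S - Lstar ≤ Real.log d / c + (η / c - 1) * Lstar := by
    rw [← heq]; linarith
  exact this



end
end

section
/- Let d ≥ 1, s an integer with 1 ≤ s ≤ d, η > 0 and T ≥ 1. For every sequence ℓ_1,…,ℓ_T of s-sparse loss vectors in [0,1]^d, the Exponential Weight Algorithm with parameter −η guarantees R_T ≤ (log d)/(1 − e^{−η}) + (e^{η} − 1) · Ts / (2d). -/
open Finset Filter MeasureTheory ProbabilityTheory Real

noncomputable section

lemma exp_convex_bound_s6 {η z : ℝ} (hz0 : 0 ≤ z) (hz1 : z ≤ 1) :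
    Real.exp (-η * z) ≤ 1 - (1 - Real.exp (-η)) * z := by
  have h := convexOn_exp.2 (Set.mem_univ (0:ℝ)) (Set.mem_univ (-η))
    (by linarith : (0:ℝ) ≤ 1 - z) hz0 (by ring)
  simp only [smul_eq_mul, Real.exp_zero] at h
  have e : -η * z = (1-z) * 0 + z * (-η) := by ring
  rw [e]
  calc Real.exp ((1-z) * 0 + z * (-η)) ≤ (1-z) * 1 + z * Real.exp (-η) := by
        simpa using h
    _ = 1 - (1 - Real.exp (-η)) * z := by ring

/-- For `s`-sparse losses in `[0,1]^d`, the Exponential Weight Algorithm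
with parameter `-η` guarantees `R_T ≤ log d/(1-e^{-η}) + (e^η - 1) Ts/(2d)`. -/
theorem ewa_sparse_loss_bound (d s T : ℕ) (hd : 1 ≤ d) (hs1 : 1 ≤ s) (hsd : s ≤ d)
    (hT : 1 ≤ T) (η : ℝ) (hη : 0 < η)
    (ℓ : ℕ → Fin d → ℝ) (hℓ : ∀ t, InCube (ℓ t) ∧ IsSparse s (ℓ t)) :
    lossRegret (ewa d η) ℓ T ≤
      Real.log d / (1 - Real.exp (-η)) + (Real.exp η - 1) * T * s / (2 * d) := by
  have hexp_lt : Real.exp (-η) < 1 := by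
    rw [Real.exp_lt_one_iff]; linarith
  set c : ℝ := 1 - Real.exp (-η) with hc_def
  have hc_pos : 0 < c := by simp only [hc_def]; linarith
  have hc_lt : c < 1 := by
    have := Real.exp_pos (-η); simp only [hc_def]; linarith
  set S : ℕ → Fin d → ℝ := fun t i => ∑ k ∈ Finset.range t, ℓ k i with hS
  set W : ℕ → ℝ := fun t => ∑ j, Real.exp (-η * S t j) with hW
  have hWpos : ∀ t, 0 < W t :=
    fun t => Finset.sum_pos (fun j _ => Real.exp_pos _) ⟨⟨0, hd⟩, Finset.mem_univ _⟩
  have hfin : ∀ (t : ℕ) (i : Fin d), ∑ k : Fin t, ℓ k i = ∑ k ∈ Finset.range t, ℓ k i :=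
    fun t i => Fin.sum_univ_eq_sum_range (fun k => ℓ k i) t
  have hplay : ∀ t i, play (ewa d η) ℓ t i = Real.exp (-η * S t i) / W t := by
    intro t i
    simp only [play, ewa, hS, hW, hfin]
  set A : ℕ → ℝ := fun t => ∑ i, ℓ t i * play (ewa d η) ℓ t i with hA
  have hcube : ∀ t i, 0 ≤ ℓ t i ∧ ℓ t i ≤ 1 := fun t i => (hℓ t).1 i
  have hsum_play : ∀ t, ∑ i, play (ewa d η) ℓ t i = 1 := by
    intro t
    simp only [hplay]
    rw [← Finset.sum_div]
    exact div_self (ne_of_gt (hWpos t))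
  have hA0 : ∀ t, 0 ≤ A t := by
    intro t
    refine Finset.sum_nonneg fun i _ => mul_nonneg (hcube t i).1 ?_
    rw [hplay]; positivity
  have hA1 : ∀ t, A t ≤ 1 := by
    intro t
    rw [hA, ← hsum_play t]
    refine Finset.sum_le_sum fun i _ => ?_
    nth_rewrite 2 [← one_mul (play (ewa d η) ℓ t i)]
    refine mul_le_mul_of_nonneg_right (hcube t i).2 ?_
    rw [hplay]; positivity
  have hfac_pos : ∀ t, 0 < 1 - c * A t := by
    intro t
    nlinarith [hA0 t, hA1 t]
  -- per-step potential inequality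
  have hstep : ∀ t, W (t+1) ≤ W t * (1 - c * A t) := by
    intro t
    have h1 : W (t+1) = ∑ j, Real.exp (-η * S t j) * Real.exp (-η * ℓ t j) := by
      simp only [hW, hS]
      refine Finset.sum_congr rfl fun j _ => ?_
      rw [← Real.exp_add, Finset.sum_range_succ]
      ring_nf
    rw [h1]
    have h2 : ∑ j, Real.exp (-η * S t j) * Real.exp (-η * ℓ t j)
        ≤ ∑ j, Real.exp (-η * S t j) * (1 - c * ℓ t j) := by
      refine Finset.sum_le_sum fun j _ => ?_
      refine mul_le_mul_of_nonneg_left ?_ (Real.exp_pos _).le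
      exact exp_convex_bound_s6 (hcube t j).1 (hcube t j).2
    refine h2.trans (le_of_eq ?_)
    have hWne : W t ≠ 0 := ne_of_gt (hWpos t)
    have h3 : ∑ j, Real.exp (-η * S t j) * ℓ t j = W t * A t := by
      rw [hA, Finset.mul_sum]
      refine Finset.sum_congr rfl fun j _ => ?_
      rw [hplay]
      field_simp
    calc ∑ j, Real.exp (-η * S t j) * (1 - c * ℓ t j)
        = W t - c * ∑ j, Real.exp (-η * S t j) * ℓ t j := by
          rw [hW, Finset.mul_sum, ← Finset.sum_sub_distrib]
          refine Finset.sum_congr rfl fun j _ => ?_; ring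
      _ = W t * (1 - c * A t) := by rw [h3]; ring
  -- summed log-potential inequality
  have hlog : ∀ t, Real.log (W t) ≤ Real.log d - c * ∑ k ∈ Finset.range t, A k := by
    intro t
    induction t with
    | zero =>
      simp only [Finset.range_zero, Finset.sum_empty, mul_zero, sub_zero]
      have : W 0 = d := by
        simp [hW, hS]
      rw [this]
    | succ t ih =>
      have h1 : Real.log (W (t+1)) ≤ Real.log (W t * (1 - c * A t)) := by
        refine Real.log_le_log (hWpos _) (hstep t)
      rw [Real.log_mul (ne_of_gt (hWpos t)) (ne_of_gt (hfac_pos t))] at h1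
      have h2 : Real.log (1 - c * A t) ≤ -(c * A t) := by
        have := Real.log_le_sub_one_of_pos (hfac_pos t)
        linarith
      rw [Finset.sum_range_succ]
      linarith
  -- lower bound on the potential via the best expert
  have hbdd : BddBelow (Set.range fun i => S T i) := (Set.finite_range _).bddBelow
  obtain ⟨i0, _, hi0⟩ := Finset.exists_min_image Finset.univ (fun i => S T i)
    ⟨⟨0, hd⟩, Finset.mem_univ _⟩
  haveI : Nonempty (Fin d) := ⟨⟨0, hd⟩⟩
  have hm_eq : (⨅ i, S T i) = S T i0 := by
    refine le_antisymm (ciInf_le hbdd i0) (le_ciInf fun i => hi0 i (Finset.mem_univ i))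
  set m : ℝ := S T i0 with hm_def
  have hlow : -η * m ≤ Real.log (W T) := by
    have h1 : Real.exp (-η * m) ≤ W T :=
      Finset.single_le_sum (f := fun j => Real.exp (-η * S T j))
        (fun j _ => (Real.exp_pos _).le) (Finset.mem_univ i0)
    calc -η * m = Real.log (Real.exp (-η * m)) := (Real.log_exp _).symm
      _ ≤ Real.log (W T) := Real.log_le_log (Real.exp_pos _) h1
  -- m is nonnegative and at most Ts/d
  have hm0 : 0 ≤ m := Finset.sum_nonneg fun k _ => (hcube k i0).1
  have hsum_row : ∀ t, ∑ i, ℓ t i ≤ (s : ℝ) := by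
    intro t
    have hsp : (Finset.univ.filter fun i => ℓ t i ≠ 0).card ≤ s := by
      have := (hℓ t).2
      rw [IsSparse, supp0, Set.ncard_eq_toFinset_card'] at this
      simpa [Set.toFinset_setOf] using this
    calc ∑ i, ℓ t i = ∑ i ∈ Finset.univ.filter fun i => ℓ t i ≠ 0, ℓ t i := by
          refine (Finset.sum_filter_ne_zero _).symm
      _ ≤ ∑ i ∈ Finset.univ.filter fun i => ℓ t i ≠ 0, 1 :=
          Finset.sum_le_sum fun i _ => (hcube t i).2
      _ = ((Finset.univ.filter fun i => ℓ t i ≠ 0).card : ℝ) := by simp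
      _ ≤ (s : ℝ) := by exact_mod_cast hsp
  have hm_le : (d : ℝ) * m ≤ (T : ℝ) * s := by
    have h1 : (d : ℝ) * m ≤ ∑ i, S T i := by
      have : ∑ i, m ≤ ∑ i, S T i :=
        Finset.sum_le_sum fun i _ => hi0 i (Finset.mem_univ i)
      simpa [Finset.sum_const, nsmul_eq_mul] using this
    have h2 : ∑ i, S T i ≤ (T : ℝ) * s := by
      have : ∑ i, S T i = ∑ t ∈ Finset.range T, ∑ i, ℓ t i := by
        rw [Finset.sum_comm]
      rw [this]
      calc ∑ t ∈ Finset.range T, ∑ i, ℓ t i ≤ ∑ t ∈ Finset.range T, (s : ℝ) :=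
            Finset.sum_le_sum fun t _ => hsum_row t
        _ = (T : ℝ) * s := by simp [mul_comm]
    linarith
  -- coefficient inequality
  have hsinh : 2 * η ≤ Real.exp η - Real.exp (-η) := by
    have h := Real.self_le_sinh_iff.mpr hη.le
    rw [Real.sinh_eq] at h
    linarith
  have hee : Real.exp (-η) * Real.exp η = 1 := by
    rw [← Real.exp_add]; simp
  have hcoef0 : 0 ≤ η - c := by
    have := Real.add_one_le_exp (-η)
    simp only [hc_def]; linarith
  have hcoef : (η - c) / c ≤ (Real.exp η - 1) / 2 := by
    rw [div_le_div_iff₀ hc_pos two_pos]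
    have hkey : c * (Real.exp η - 1) = Real.exp η + Real.exp (-η) - 2 := by
      simp only [hc_def]; nlinarith [hee]
    simp only [hc_def]
    nlinarith [hsinh, hee]
  -- put everything together
  have hA_tot : c * ∑ t ∈ Finset.range T, A t ≤ Real.log d + η * m := by
    have h1 := hlog T
    linarith [hlow]
  have hreg : lossRegret (ewa d η) ℓ T = (∑ t ∈ Finset.range T, A t) - m := by
    rw [lossRegret, hm_eq]
  rw [hreg]
  have hd_pos : (0:ℝ) < d := by exact_mod_cast hd
  have hcne : c ≠ 0 := ne_of_gt hc_pos
  have e1 : (∑ t ∈ Finset.range T, A t) * c ≤ Real.log d + η * m := by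
    rw [mul_comm]; exact hA_tot
  have hexp1 : (1:ℝ) ≤ Real.exp η := by
    have := Real.add_one_le_exp η; linarith
  have e3 : ((η - c) / c) * m ≤ (Real.exp η - 1) * T * s / (2 * d) := by
    have h1 : ((η - c) / c) * m ≤ ((Real.exp η - 1) / 2) * m :=
      mul_le_mul_of_nonneg_right hcoef hm0
    have h2 : m ≤ (T : ℝ) * s / d := by
      rw [le_div_iff₀ hd_pos, mul_comm]; exact hm_le
    have h3 : ((Real.exp η - 1) / 2) * m ≤ ((Real.exp η - 1) / 2) * ((T : ℝ) * s / d) :=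
      mul_le_mul_of_nonneg_left h2 (by linarith)
    have h4 : ((Real.exp η - 1) / 2) * ((T : ℝ) * s / d) = (Real.exp η - 1) * T * s / (2 * d) := by
      field_simp
    linarith
  have main2 : (∑ t ∈ Finset.range T, A t) - m ≤ Real.log d / c + ((η - c) / c) * m := by
    have hexp2 : Real.log d / c + ((η - c) / c) * m = (Real.log d + (η - c) * m) / c := by
      field_simp
    have hr1 : ((∑ t ∈ Finset.range T, A t) - m) * c
        = (∑ t ∈ Finset.range T, A t) * c - c * m := by ring
    have hr2 : (η - c) * m = η * m - c * m := by ring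
    rw [hexp2, le_div_iff₀ hc_pos, hr1, hr2]
    linarith [e1]
  linarith

end
end

section
/- Let d ≥ 2 and T ≥ 1. There exists a full-information strategy (not depending on any sparsity parameter) such that for every sequence ℓ_1,…,ℓ_T of loss vectors in [0,1]^d with s* := max_{1 ≤ t ≤ T} ‖ℓ_t‖_0 ≥ 1, the regret satisfies R_T ≤ 4√(T s* log d / d) + ⌈log₂ s*⌉ · (log d)/2 + 5 s* √(log d / (dT)). -/
open Finset Filter MeasureTheory ProbabilityTheory Real

noncomputable section

namespace AdaptiveSparseAux

/-! ### Elementary inequalities -/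

lemma exp_chord {η z : ℝ} (hz0 : 0 ≤ z) (hz1 : z ≤ 1) :
    Real.exp (-η * z) ≤ 1 - (1 - Real.exp (-η)) * z := by
  have h := convexOn_exp.2 (Set.mem_univ (0:ℝ)) (Set.mem_univ (-η))
    (by linarith : (0:ℝ) ≤ 1 - z) hz0 (by ring)
  simp only [smul_eq_mul, mul_zero, zero_add, Real.exp_zero, mul_one] at h
  have e1 : z * -η = -η * z := by ring
  rw [e1] at h
  linarith

lemma exp_neg_quad {x : ℝ} (hx : 0 ≤ x) : Real.exp (-x) ≤ 1 - x + x ^ 2 / 2 := by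
  have h1 : 1 + x + x ^ 2 / 2 ≤ Real.exp x := Real.quadratic_le_exp_of_nonneg hx
  have hp : (0:ℝ) < 1 + x + x ^ 2 / 2 := by positivity
  have h2 : Real.exp (-x) ≤ (1 + x + x ^ 2 / 2)⁻¹ := by
    rw [Real.exp_neg]
    exact inv_anti₀ hp h1
  refine h2.trans ?_
  rw [inv_le_iff_one_le_mul₀ hp]
  nlinarith [sq_nonneg x, sq_nonneg (x^2)]

/-- mixing/shrinkage coefficient -/
def gam (η : ℝ) : ℝ := (1 - Real.exp (-η)) / η

lemma gam_pos {η : ℝ} (hη : 0 < η) : 0 < gam η := by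
  have : Real.exp (-η) < 1 := Real.exp_lt_one_iff.2 (by linarith)
  exact div_pos (by linarith) hη

lemma gam_le_one {η : ℝ} (hη : 0 < η) : gam η ≤ 1 := by
  rw [gam, div_le_one hη]
  have := Real.add_one_le_exp (-η)
  linarith

lemma one_sub_gam_le {η : ℝ} (hη : 0 < η) : 1 - gam η ≤ η / 2 := by
  have h := exp_neg_quad hη.le
  rw [gam]
  rw [sub_le_iff_le_add, ← sub_le_iff_le_add']
  rw [le_div_iff₀ hη]
  nlinarith

/-! ### Exponential-weights potential -/

def W {d : ℕ} (η : ℝ) (L : Fin d → ℝ) : ℝ := ∑ i, Real.exp (-η * L i)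

def Phi (d : ℕ) (η : ℝ) (L : Fin d → ℝ) : ℝ := (Real.log (W η L) - Real.log d) / η

def pv {d : ℕ} (η : ℝ) (L : Fin d → ℝ) (i : Fin d) : ℝ := Real.exp (-η * L i) / W η L

lemma W_pos {d : ℕ} (hd : 0 < d) (η : ℝ) (L : Fin d → ℝ) : 0 < W η L := by
  have : Nonempty (Fin d) := Fin.pos_iff_nonempty.mp hd
  exact Finset.sum_pos (fun i _ => Real.exp_pos _) Finset.univ_nonempty

lemma pv_nonneg {d : ℕ} (hd : 0 < d) (η : ℝ) (L : Fin d → ℝ) (i : Fin d) : 0 ≤ pv η L i :=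
  div_nonneg (Real.exp_pos _).le (W_pos hd η L).le

lemma sum_pv {d : ℕ} (hd : 0 < d) (η : ℝ) (L : Fin d → ℝ) : ∑ i, pv η L i = 1 := by
  simp only [pv]
  rw [← Finset.sum_div]
  exact div_self (W_pos hd η L).ne'

/-- monotonicity of the potential in the learning rate (power-mean inequality) -/
lemma Phi_mono {d : ℕ} (hd : 0 < d) {a b : ℝ} (ha : 0 < a) (hab : a ≤ b) (L : Fin d → ℝ) :
    Phi d a L ≤ Phi d b L := by
  have hb : 0 < b := lt_of_lt_of_le ha hab
  have hdR : (0:ℝ) < d := by exact_mod_cast hd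
  set p : ℝ := b / a with hp_def
  have hp : 1 ≤ p := (one_le_div ha).2 hab
  have hp0 : 0 < p := lt_of_lt_of_le one_pos hp
  have key := Real.arith_mean_le_rpow_mean (Finset.univ : Finset (Fin d))
    (fun _ => (d:ℝ)⁻¹) (fun i => Real.exp (-a * L i))
    (fun i _ => by positivity)
    (by rw [Finset.sum_const, Finset.card_univ, Fintype.card_fin, nsmul_eq_mul,
          mul_inv_cancel₀ (ne_of_gt hdR)])
    (fun i _ => (Real.exp_pos _).le) hp
  have hz : ∀ i : Fin d, Real.exp (-a * L i) ^ p = Real.exp (-b * L i) := by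
    intro i
    rw [← Real.exp_mul]
    congr 1
    rw [hp_def]
    field_simp
  simp only [hz] at key
  have hA : (∑ i, (d:ℝ)⁻¹ * Real.exp (-a * L i)) = W a L / d := by
    rw [W, Finset.sum_div]
    exact Finset.sum_congr rfl (fun i _ => by rw [inv_mul_eq_div])
  have hB : (∑ i, (d:ℝ)⁻¹ * Real.exp (-b * L i)) = W b L / d := by
    rw [W, Finset.sum_div]
    exact Finset.sum_congr rfl (fun i _ => by rw [inv_mul_eq_div])
  rw [hA, hB] at key
  have hWa : 0 < W a L / d := div_pos (W_pos hd a L) hdR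
  have hWb : 0 < W b L / d := div_pos (W_pos hd b L) hdR
  have hlog : Real.log (W a L / d) ≤ (1/p) * Real.log (W b L / d) := by
    calc Real.log (W a L / d) ≤ Real.log ((W b L / d) ^ (1/p)) := Real.log_le_log hWa key
    _ = (1/p) * Real.log (W b L / d) := Real.log_rpow hWb _
  have hla : Real.log (W a L / d) = Real.log (W a L) - Real.log d :=
    Real.log_div (W_pos hd a L).ne' hdR.ne'
  have hlb : Real.log (W b L / d) = Real.log (W b L) - Real.log d :=
    Real.log_div (W_pos hd b L).ne' hdR.ne'
  rw [hla, hlb] at hlog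
  rw [Phi, Phi, div_le_div_iff₀ ha hb]
  have h1p : (1:ℝ)/p = a / b := by rw [hp_def]; field_simp
  rw [h1p] at hlog
  calc (Real.log (W a L) - Real.log d) * b ≤ (a/b * (Real.log (W b L) - Real.log d)) * b :=
        mul_le_mul_of_nonneg_right hlog hb.le
  _ = (Real.log (W b L) - Real.log d) * a := by field_simp

/-- the per-step potential decrease -/
lemma step {d : ℕ} (hd : 0 < d) {η : ℝ} (hη : 0 < η) (L ℓv : Fin d → ℝ)
    (hc : ∀ i, ℓv i ∈ Set.Icc (0:ℝ) 1) :
    gam η * ∑ i, ℓv i * pv η L i ≤ Phi d η L - Phi d η (fun i => L i + ℓv i) := by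
  set S := ∑ i, ℓv i * pv η L i with hS
  have hWpos := W_pos hd η L
  have hS0 : 0 ≤ S := Finset.sum_nonneg fun i _ => mul_nonneg (hc i).1 (pv_nonneg hd η L i)
  have hS1 : S ≤ 1 := by
    have : S ≤ ∑ i, pv η L i := Finset.sum_le_sum fun i _ => by
      have := pv_nonneg hd η L i
      nlinarith [(hc i).2]
    rw [sum_pv hd η L] at this; exact this
  have hE : 0 ≤ 1 - Real.exp (-η) := by
    have : Real.exp (-η) ≤ 1 := Real.exp_le_one_iff.2 (by linarith)
    linarith
  have hE1 : Real.exp (-η) > 0 := Real.exp_pos _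
  have hWup : W η (fun i => L i + ℓv i) ≤ W η L * (1 - (1 - Real.exp (-η)) * S) := by
    have h1 : ∀ i : Fin d, Real.exp (-η * (L i + ℓv i))
        ≤ Real.exp (-η * L i) * (1 - (1 - Real.exp (-η)) * ℓv i) := by
      intro i
      have : Real.exp (-η * (L i + ℓv i)) = Real.exp (-η * L i) * Real.exp (-η * ℓv i) := by
        rw [← Real.exp_add]; ring_nf
      rw [this]
      exact mul_le_mul_of_nonneg_left (exp_chord (hc i).1 (hc i).2) (Real.exp_pos _).le
    calc W η (fun i => L i + ℓv i)
        ≤ ∑ i, Real.exp (-η * L i) * (1 - (1 - Real.exp (-η)) * ℓv i) :=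
          Finset.sum_le_sum fun i _ => h1 i
    _ = W η L - (1 - Real.exp (-η)) * ∑ i, Real.exp (-η * L i) * ℓv i := by
        rw [W, Finset.mul_sum, ← Finset.sum_sub_distrib]
        exact Finset.sum_congr rfl fun i _ => by ring
    _ = W η L * (1 - (1 - Real.exp (-η)) * S) := by
        have : ∑ i, Real.exp (-η * L i) * ℓv i = W η L * S := by
          rw [hS, Finset.mul_sum]
          exact Finset.sum_congr rfl fun i _ => by
            rw [pv]
            field_simp
        rw [this]; ring
  have hfac : 0 < 1 - (1 - Real.exp (-η)) * S := by nlinarith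
  have hWup_pos := W_pos hd η (fun i => L i + ℓv i)
  have hlog : Real.log (W η (fun i => L i + ℓv i))
      ≤ Real.log (W η L) - (1 - Real.exp (-η)) * S := by
    calc Real.log (W η (fun i => L i + ℓv i))
        ≤ Real.log (W η L * (1 - (1 - Real.exp (-η)) * S)) := Real.log_le_log hWup_pos hWup
    _ = Real.log (W η L) + Real.log (1 - (1 - Real.exp (-η)) * S) :=
        Real.log_mul hWpos.ne' hfac.ne'
    _ ≤ Real.log (W η L) + ((1 - (1 - Real.exp (-η)) * S) - 1) := by
        have := Real.log_le_sub_one_of_pos hfac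
        linarith
    _ = Real.log (W η L) - (1 - Real.exp (-η)) * S := by ring
  rw [Phi, Phi, gam, ← sub_div, div_mul_eq_mul_div, div_le_div_iff₀ hη hη]
  nlinarith [hlog]

lemma Phi_zero {d : ℕ} {η : ℝ} (L : Fin d → ℝ) (hL : ∀ i, L i = 0) :
    Phi d η L = 0 := by
  have : W η L = d := by
    rw [W]
    rw [Finset.sum_congr rfl (fun i _ => by
      rw [hL i, mul_zero, Real.exp_zero] : ∀ i ∈ Finset.univ, Real.exp (-η * L i) = 1)]
    simp
  rw [Phi, this, sub_self, zero_div]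

lemma Phi_final {d : ℕ} {η : ℝ} (hη : 0 < η) (L : Fin d → ℝ) (i₀ : Fin d) :
    -(L i₀) - Real.log d / η ≤ Phi d η L := by
  have h1 : Real.exp (-η * L i₀) ≤ W η L :=
    Finset.single_le_sum (f := fun i => Real.exp (-η * L i))
      (fun i _ => (Real.exp_pos _).le) (Finset.mem_univ i₀)
  have h2 : -η * L i₀ ≤ Real.log (W η L) := by
    calc -η * L i₀ = Real.log (Real.exp (-η * L i₀)) := (Real.log_exp _).symm
    _ ≤ Real.log (W η L) := Real.log_le_log (Real.exp_pos _) h1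
  rw [Phi, le_div_iff₀ hη]
  have h3 : Real.log d / η * η = Real.log d := div_mul_cancel₀ _ hη.ne'
  nlinarith [h2, h3]

/-! ### The adaptive learning rate and strategy -/

def eta (d T m : ℕ) : ℝ := Real.sqrt (d * Real.log d / (T * m))

def msq {d : ℕ} (ℓ : ℕ → Fin d → ℝ) (t : ℕ) : ℕ :=
  max 1 ((Finset.range t).sup fun u => supp0 (ℓ u))

def cum {d : ℕ} (ℓ : ℕ → Fin d → ℝ) (t : ℕ) (i : Fin d) : ℝ := ∑ u ∈ Finset.range t, ℓ u i

def strat (d T : ℕ) : ∀ t : ℕ, (Fin t → (Fin d → ℝ)) → (Fin d → ℝ) :=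
  fun t h i =>
    gam (eta d T (max 1 (Finset.univ.sup fun u => supp0 (h u)))) *
      pv (eta d T (max 1 (Finset.univ.sup fun u => supp0 (h u)))) (fun j => ∑ u, h u j) i +
    (1 - gam (eta d T (max 1 (Finset.univ.sup fun u => supp0 (h u))))) / d

lemma sup_univ_fin (f : ℕ → ℕ) (t : ℕ) :
    (Finset.univ.sup fun u : Fin t => f u) = (Finset.range t).sup f := by
  apply le_antisymm
  · exact Finset.sup_le fun u _ => Finset.le_sup (Finset.mem_range.2 u.isLt)
  · exact Finset.sup_le fun u hu =>
      Finset.le_sup (f := fun u : Fin t => f u) (Finset.mem_univ (⟨u, Finset.mem_range.1 hu⟩ : Fin t))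

lemma strat_apply {d T : ℕ} (ℓ : ℕ → Fin d → ℝ) (t : ℕ) (i : Fin d) :
    strat d T t (fun k : Fin t => ℓ k) i =
      gam (eta d T (msq ℓ t)) * pv (eta d T (msq ℓ t)) (cum ℓ t) i
        + (1 - gam (eta d T (msq ℓ t))) / d := by
  have h1 : (Finset.univ.sup fun u : Fin t => supp0 (ℓ (↑u : ℕ))) =
      (Finset.range t).sup fun u => supp0 (ℓ u) := sup_univ_fin (fun u => supp0 (ℓ u)) t
  have h2 : (fun j => ∑ u : Fin t, ℓ (↑u : ℕ) j) = cum ℓ t := by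
    funext j
    rw [cum]
    exact Fin.sum_univ_eq_sum_range (fun u => ℓ u j) t
  rw [strat]
  simp only [h2, msq, h1]

lemma msq_mono {d : ℕ} (ℓ : ℕ → Fin d → ℝ) : Monotone (msq ℓ) := by
  intro a b hab
  exact max_le_max le_rfl (Finset.sup_mono (Finset.range_subset_range.2 hab))

lemma msq_pos {d : ℕ} (ℓ : ℕ → Fin d → ℝ) (t : ℕ) : 1 ≤ msq ℓ t := le_max_left _ _

lemma eta_pos {d T m : ℕ} (hd : 2 ≤ d) (hT : 1 ≤ T) (hm : 1 ≤ m) : 0 < eta d T m := by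
  apply Real.sqrt_pos.2
  have hld : 0 < Real.log d := Real.log_pos (by exact_mod_cast hd)
  have h0 : (0:ℝ) < d := by exact_mod_cast (by omega : 0 < d)
  have h1 : (0:ℝ) < T := by exact_mod_cast hT
  have h2 : (0:ℝ) < m := by exact_mod_cast hm
  positivity

lemma eta_anti {d T : ℕ} (hd : 2 ≤ d) (hT : 1 ≤ T) {a b : ℕ} (ha : 1 ≤ a) (hab : a ≤ b) :
    eta d T b ≤ eta d T a := by
  apply Real.sqrt_le_sqrt
  have hld : 0 < Real.log d := Real.log_pos (by exact_mod_cast hd)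
  have hdp : (0:ℝ) < d := by exact_mod_cast (by omega : 0 < d)
  have h1 : (0:ℝ) < T := by exact_mod_cast hT
  have h2 : (0:ℝ) < a := by exact_mod_cast ha
  have h3 : (a:ℝ) ≤ b := by exact_mod_cast hab
  apply div_le_div_of_nonneg_left (by positivity) (by positivity)
  nlinarith

/-! ### sparsity and square-root arithmetic -/

lemma supp0_eq_card {d : ℕ} (w : Fin d → ℝ) :
    supp0 w = (Finset.univ.filter fun i => w i ≠ 0).card := by
  classical
  rw [supp0, ← Set.ncard_coe_finset]
  congr 1
  ext i; simp

lemma sum_le_supp0 {d : ℕ} {w : Fin d → ℝ} (h : InCube w) : ∑ i, w i ≤ (supp0 w : ℝ) := by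
  classical
  rw [← Finset.sum_filter_ne_zero]
  calc ∑ i ∈ Finset.univ.filter fun i => w i ≠ 0, w i
      ≤ (Finset.univ.filter fun i => w i ≠ 0).card • (1:ℝ) :=
        Finset.sum_le_card_nsmul _ _ 1 (fun i _ => (h i).2)
  _ = ((supp0 w : ℝ)) := by rw [supp0_eq_card, nsmul_eq_mul, mul_one]

section
variable {d T : ℕ}

lemma log_div_eta (hd : 2 ≤ d) (hT : 1 ≤ T) {m : ℕ} (hm : 1 ≤ m) :
    Real.log d / eta d T m = Real.sqrt (T * m * Real.log d / d) := by
  have hL : 0 < Real.log d := Real.log_pos (by exact_mod_cast hd)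
  have hdR : (0:ℝ) < d := by exact_mod_cast (by omega : 0 < d)
  have hTR : (0:ℝ) < T := by exact_mod_cast hT
  have hmR : (0:ℝ) < m := by exact_mod_cast hm
  have hepos : 0 < eta d T m := eta_pos hd hT hm
  have h1 : Real.sqrt (T * m * Real.log d / d) * eta d T m = Real.log d := by
    rw [eta, ← Real.sqrt_mul (by positivity)]
    rw [show (T:ℝ) * m * Real.log d / d * (d * Real.log d / (T * m)) = (Real.log d)^2 by
      field_simp]
    exact Real.sqrt_sq hL.le
  rw [div_eq_iff hepos.ne']
  exact h1.symm

lemma eta_div_d (hd : 2 ≤ d) (hT : 1 ≤ T) {m : ℕ} (hm : 1 ≤ m) :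
    eta d T m / d = Real.sqrt (Real.log d / (d * T)) / Real.sqrt m := by
  have hL : 0 < Real.log d := Real.log_pos (by exact_mod_cast hd)
  have hdR : (0:ℝ) < d := by exact_mod_cast (by omega : 0 < d)
  have hTR : (0:ℝ) < T := by exact_mod_cast hT
  have hmR : (0:ℝ) < m := by exact_mod_cast hm
  have h2 : (d:ℝ) * Real.log d / (T * m) = (Real.log d / (d * T) / m) * (d:ℝ)^2 := by
    field_simp
  rw [eta, h2, Real.sqrt_mul (by positivity), Real.sqrt_sq hdR.le,
    mul_div_assoc, div_self hdR.ne', mul_one, Real.sqrt_div (by positivity)]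

lemma sqrt_T_mul (hd : 2 ≤ d) (hT : 1 ≤ T) {s : ℕ} (hs : 1 ≤ s) :
    Real.sqrt ((T:ℝ) * s * Real.log d / d)
      = (T:ℝ) * (Real.sqrt s * Real.sqrt (Real.log d / (d * T))) := by
  have hL : 0 < Real.log d := Real.log_pos (by exact_mod_cast hd)
  have hdR : (0:ℝ) < d := by exact_mod_cast (by omega : 0 < d)
  have hTR : (0:ℝ) < T := by exact_mod_cast hT
  have hsR : (0:ℝ) < s := by exact_mod_cast hs
  have h3 : (T:ℝ) * s * Real.log d / d = ((T:ℝ)^2) * ((s:ℝ) * (Real.log d / (d * T))) := by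
    field_simp
  rw [h3, Real.sqrt_mul (by positivity), Real.sqrt_sq hTR.le, Real.sqrt_mul hsR.le]

end

end AdaptiveSparseAux

open AdaptiveSparseAux in
/-- There is a full-information strategy, not depending on any sparsity
parameter, which against any losses in `[0,1]^d` with maximal sparsity level
`s* = max_{t<T} ‖ℓ_t‖₀ ≥ 1` guarantees
`R_T ≤ 4√(T s* log d / d) + ⌈log₂ s*⌉ (log d)/2 + 5 s* √(log d/(dT))`. -/
theorem adaptive_sparse_losses (d T : ℕ) (hd : 2 ≤ d) (hT : 1 ≤ T) :
    ∃ σ : ∀ t : ℕ, (Fin t → (Fin d → ℝ)) → (Fin d → ℝ), IsStrategy σ ∧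
      ∀ ℓ : ℕ → Fin d → ℝ, (∀ t, InCube (ℓ t)) →
        ∀ sStar : ℕ, sStar = (Finset.range T).sup (fun t => supp0 (ℓ t)) → 1 ≤ sStar →
          lossRegret σ ℓ T ≤
            4 * Real.sqrt (T * sStar * Real.log d / d) +
              (⌈Real.logb 2 sStar⌉ : ℝ) * Real.log d / 2 +
              5 * sStar * Real.sqrt (Real.log d / (d * T)) := by
  classical
  have hd0 : 0 < d := by omega
  have hdR : (0:ℝ) < d := by exact_mod_cast hd0
  have hTR : (0:ℝ) < T := by exact_mod_cast hT
  have hL : 0 < Real.log d := Real.log_pos (by exact_mod_cast hd)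
  have hne : Nonempty (Fin d) := Fin.pos_iff_nonempty.mp hd0
  refine ⟨strat d T, ?_, ?_⟩
  · -- validity of the strategy
    intro t h
    simp only [strat]
    set η := eta d T (max 1 (Finset.univ.sup fun u => supp0 (h u))) with hηdef
    have hηpos : 0 < η := eta_pos hd hT (le_max_left _ _)
    have hg0 := gam_pos hηpos
    have hg1 := gam_le_one hηpos
    constructor
    · intro i
      have h1 := pv_nonneg hd0 η (fun j => ∑ u, h u j) i
      have h2 : (0:ℝ) ≤ 1 - gam η := by linarith
      positivity
    · rw [Finset.sum_add_distrib, ← Finset.mul_sum, sum_pv hd0, Finset.sum_const,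
        Finset.card_univ, Fintype.card_fin, nsmul_eq_mul, mul_one]
      field_simp
      ring
  · -- regret bound
    intro ℓ hcube sStar hsup hs1
    have hsR : (1:ℝ) ≤ sStar := by exact_mod_cast hs1
    have hGpos : ∀ t, 0 < eta d T (msq ℓ t) := fun t => eta_pos hd hT (msq_pos ℓ t)
    have hmsqT : msq ℓ T = sStar := by rw [msq, ← hsup]; exact max_eq_right hs1
    have hms : ∀ t, t ≤ T → msq ℓ t ≤ sStar := fun t ht => hmsqT ▸ msq_mono ℓ ht
    -- the telescoping potential bound
    have tele : ∀ n, (∑ t ∈ Finset.range n,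
          gam (eta d T (msq ℓ t)) * ∑ i, ℓ t i * pv (eta d T (msq ℓ t)) (cum ℓ t) i)
        + Phi d (eta d T (msq ℓ (n - 1))) (cum ℓ n) ≤ 0 := by
      intro n
      induction n with
      | zero =>
        simp only [Finset.range_zero, Finset.sum_empty, zero_add]
        exact le_of_eq (Phi_zero (cum ℓ 0) (fun i => by simp [cum]))
      | succ n ih =>
        have hstep := step hd0 (hGpos n) (cum ℓ n) (ℓ n) (hcube n)
        have hcum : (fun i => cum ℓ n i + ℓ n i) = cum ℓ (n+1) := by
          funext i
          rw [cum, cum, Finset.sum_range_succ]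
        have hmon2 : Phi d (eta d T (msq ℓ n)) (cum ℓ n)
            ≤ Phi d (eta d T (msq ℓ (n - 1))) (cum ℓ n) :=
          Phi_mono hd0 (hGpos n)
            (eta_anti hd hT (msq_pos ℓ (n-1)) (msq_mono ℓ (Nat.sub_le n 1))) (cum ℓ n)
        rw [Finset.sum_range_succ, Nat.add_sub_cancel]
        rw [← hcum] at *
        linarith [hstep, hmon2, ih]
    -- the best arm
    obtain ⟨i₀, hi₀⟩ := Finite.exists_min (fun i : Fin d => ∑ t ∈ Finset.range T, ℓ t i)
    have hInf : (∑ t ∈ Finset.range T, ℓ t i₀) ≤ ⨅ i, ∑ t ∈ Finset.range T, ℓ t i :=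
      le_ciInf hi₀
    have hfin : -(cum ℓ T i₀) - Real.log d / eta d T (msq ℓ (T-1))
        ≤ Phi d (eta d T (msq ℓ (T-1))) (cum ℓ T) :=
      Phi_final (hGpos (T-1)) _ i₀
    have hgam_sum : (∑ t ∈ Finset.range T,
          gam (eta d T (msq ℓ t)) * ∑ i, ℓ t i * pv (eta d T (msq ℓ t)) (cum ℓ t) i)
        ≤ cum ℓ T i₀ + Real.log d / eta d T (msq ℓ (T-1)) := by
      have := tele T
      linarith
    -- decomposition of the per-round loss of the strategy
    have hplay : ∀ t, (∑ i, ℓ t i * play (strat d T) ℓ t i)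
        = gam (eta d T (msq ℓ t)) * (∑ i, ℓ t i * pv (eta d T (msq ℓ t)) (cum ℓ t) i)
          + (1 - gam (eta d T (msq ℓ t))) * (∑ i, ℓ t i) / d := by
      intro t
      rw [play]
      calc (∑ i, ℓ t i * strat d T t (fun k => ℓ k) i)
          = ∑ i, (gam (eta d T (msq ℓ t)) * (ℓ t i * pv (eta d T (msq ℓ t)) (cum ℓ t) i)
              + (1 - gam (eta d T (msq ℓ t))) * ℓ t i / d) := by
            refine Finset.sum_congr rfl fun i _ => ?_
            rw [strat_apply]
            ring
      _ = _ := by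
            rw [Finset.sum_add_distrib, ← Finset.mul_sum, ← Finset.sum_div, ← Finset.mul_sum]
    -- per-round bound on the uniform-mixing part
    have hmix : ∀ t ∈ Finset.range T, (1 - gam (eta d T (msq ℓ t))) * (∑ i, ℓ t i) / d
        ≤ (1/2) * (Real.sqrt (Real.log d / (d * T)) * Real.sqrt sStar)
          + (1/2) * (Real.sqrt (Real.log d / (d * T)) * ((msq ℓ (t+1) : ℝ) - msq ℓ t)) := by
      intro t ht
      have htT : t + 1 ≤ T := Finset.mem_range.1 ht
      have h1 : 0 ≤ ∑ i, ℓ t i := Finset.sum_nonneg fun i _ => (hcube t i).1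
      have h2 : ∑ i, ℓ t i ≤ (supp0 (ℓ t) : ℝ) := sum_le_supp0 (hcube t)
      have h3 : 0 ≤ 1 - gam (eta d T (msq ℓ t)) := sub_nonneg.2 (gam_le_one (hGpos t))
      have h4 : 1 - gam (eta d T (msq ℓ t)) ≤ eta d T (msq ℓ t) / 2 := one_sub_gam_le (hGpos t)
      have h5 : (supp0 (ℓ t) : ℝ) ≤ (msq ℓ (t+1) : ℝ) := by
        have : supp0 (ℓ t) ≤ msq ℓ (t+1) := by
          rw [msq]
          exact le_trans (Finset.le_sup (f := fun u => supp0 (ℓ u)) (Finset.mem_range.2 (lt_add_one t))) (le_max_right _ _)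
        exact_mod_cast this
      have hmcast : (1:ℝ) ≤ (msq ℓ t : ℝ) := by exact_mod_cast msq_pos ℓ t
      have hsqm : (1:ℝ) ≤ Real.sqrt (msq ℓ t) := by
        rw [show (1:ℝ) = Real.sqrt 1 by simp]
        exact Real.sqrt_le_sqrt hmcast
      have hmono01 : (msq ℓ t : ℝ) ≤ (msq ℓ (t+1) : ℝ) := by
        exact_mod_cast msq_mono ℓ (Nat.le_succ t)
      have hmt_le_s : (msq ℓ t : ℝ) ≤ (sStar : ℝ) := by
        exact_mod_cast hms t (by omega)
      -- key real inequality : m' / √m ≤ √s + (m' - m)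
      have hkey : (msq ℓ (t+1) : ℝ) / Real.sqrt (msq ℓ t)
          ≤ Real.sqrt sStar + ((msq ℓ (t+1) : ℝ) - msq ℓ t) := by
        have e1 : (msq ℓ (t+1) : ℝ) / Real.sqrt (msq ℓ t)
            = (msq ℓ t : ℝ) / Real.sqrt (msq ℓ t)
              + ((msq ℓ (t+1) : ℝ) - msq ℓ t) / Real.sqrt (msq ℓ t) := by
          rw [← add_div]
          ring_nf
        have e2 : (msq ℓ t : ℝ) / Real.sqrt (msq ℓ t) = Real.sqrt (msq ℓ t) :=
          Real.div_sqrt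
        have e3 : Real.sqrt (msq ℓ t) ≤ Real.sqrt sStar := Real.sqrt_le_sqrt hmt_le_s
        have e4 : ((msq ℓ (t+1) : ℝ) - msq ℓ t) / Real.sqrt (msq ℓ t)
            ≤ (msq ℓ (t+1) : ℝ) - msq ℓ t :=
          div_le_self (by linarith) hsqm
        rw [e1, e2]
        linarith
      calc (1 - gam (eta d T (msq ℓ t))) * (∑ i, ℓ t i) / d
          ≤ (eta d T (msq ℓ t) / 2) * (msq ℓ (t+1) : ℝ) / d := by
            have hnum : (1 - gam (eta d T (msq ℓ t))) * (∑ i, ℓ t i)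
                ≤ (eta d T (msq ℓ t) / 2) * (msq ℓ (t+1) : ℝ) :=
              mul_le_mul h4 (h2.trans h5) h1 (div_nonneg (hGpos t).le (by norm_num))
            exact div_le_div_of_nonneg_right hnum hdR.le
      _ = (1/2) * (eta d T (msq ℓ t) / d * (msq ℓ (t+1) : ℝ)) := by ring
      _ = (1/2) * (Real.sqrt (Real.log d / (d * T)) / Real.sqrt (msq ℓ t) * (msq ℓ (t+1) : ℝ)) := by
            rw [eta_div_d hd hT (msq_pos ℓ t)]
      _ = (1/2) * (Real.sqrt (Real.log d / (d * T)) * ((msq ℓ (t+1) : ℝ) / Real.sqrt (msq ℓ t))) := by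
            ring
      _ ≤ (1/2) * (Real.sqrt (Real.log d / (d * T)) * Real.sqrt sStar)
          + (1/2) * (Real.sqrt (Real.log d / (d * T)) * ((msq ℓ (t+1) : ℝ) - msq ℓ t)) := by
            have h0 : 0 ≤ Real.sqrt (Real.log d / (d * T)) := Real.sqrt_nonneg _
            nlinarith [hkey, h0]
    -- summing the mixing bound
    have hmixsum : (∑ t ∈ Finset.range T, (1 - gam (eta d T (msq ℓ t))) * (∑ i, ℓ t i) / d)
        ≤ (1/2) * Real.sqrt ((T:ℝ) * sStar * Real.log d / d)
          + (1/2) * ((sStar : ℝ) * Real.sqrt (Real.log d / (d * T))) := by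
      have hX0 : 0 ≤ Real.sqrt (Real.log d / (d * T)) := Real.sqrt_nonneg _
      have hsum1 := Finset.sum_le_sum hmix
      have hsum2 : ∑ t ∈ Finset.range T,
            ((1/2) * (Real.sqrt (Real.log d / (d * T)) * Real.sqrt sStar)
              + (1/2) * (Real.sqrt (Real.log d / (d * T)) * ((msq ℓ (t+1) : ℝ) - msq ℓ t)))
          = T * ((1/2) * (Real.sqrt (Real.log d / (d * T)) * Real.sqrt sStar))
            + (1/2) * (Real.sqrt (Real.log d / (d * T)) * ((msq ℓ T : ℝ) - (msq ℓ 0 : ℝ))) := by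
        rw [Finset.sum_add_distrib, Finset.sum_const, Finset.card_range, nsmul_eq_mul]
        congr 1
        have : ∀ t ∈ Finset.range T,
            (1/2) * (Real.sqrt (Real.log d / (d * T)) * ((msq ℓ (t+1) : ℝ) - msq ℓ t))
            = (1/2) * Real.sqrt (Real.log d / (d * T)) * ((msq ℓ (t+1) : ℝ) - msq ℓ t) := by
          intro t _; ring
        rw [Finset.sum_congr rfl this, ← Finset.mul_sum,
          Finset.sum_range_sub (fun t => (msq ℓ t : ℝ))]
        ring
      have hm0 : msq ℓ 0 = 1 := by simp [msq]
      have hTm : ((msq ℓ T : ℝ) - (msq ℓ 0 : ℝ)) = (sStar : ℝ) - 1 := by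
        rw [hmsqT, hm0]; norm_num
      have hmul : (T:ℝ) * ((1/2) * (Real.sqrt (Real.log d / (d * T)) * Real.sqrt sStar))
          = (1/2) * Real.sqrt ((T:ℝ) * sStar * Real.log d / d) := by
        rw [sqrt_T_mul hd hT hs1]
        ring
      calc (∑ t ∈ Finset.range T, (1 - gam (eta d T (msq ℓ t))) * (∑ i, ℓ t i) / d)
          ≤ T * ((1/2) * (Real.sqrt (Real.log d / (d * T)) * Real.sqrt sStar))
            + (1/2) * (Real.sqrt (Real.log d / (d * T)) * ((msq ℓ T : ℝ) - (msq ℓ 0 : ℝ))) := by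
            rw [← hsum2]; exact hsum1
      _ = (1/2) * Real.sqrt ((T:ℝ) * sStar * Real.log d / d)
            + (1/2) * (Real.sqrt (Real.log d / (d * T)) * ((sStar:ℝ) - 1)) := by
            rw [hTm, hmul]
      _ ≤ (1/2) * Real.sqrt ((T:ℝ) * sStar * Real.log d / d)
            + (1/2) * ((sStar : ℝ) * Real.sqrt (Real.log d / (d * T))) := by
            nlinarith [hX0, hsR]
    -- total loss decomposition
    have hplaysum : (∑ t ∈ Finset.range T, ∑ i, ℓ t i * play (strat d T) ℓ t i)
        = (∑ t ∈ Finset.range T,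
            gam (eta d T (msq ℓ t)) * ∑ i, ℓ t i * pv (eta d T (msq ℓ t)) (cum ℓ t) i)
          + (∑ t ∈ Finset.range T, (1 - gam (eta d T (msq ℓ t))) * (∑ i, ℓ t i) / d) := by
      rw [← Finset.sum_add_distrib]
      exact Finset.sum_congr rfl fun t _ => hplay t
    have hlogeta : Real.log d / eta d T (msq ℓ (T-1))
        ≤ Real.sqrt ((T:ℝ) * sStar * Real.log d / d) := by
      rw [log_div_eta hd hT (msq_pos ℓ (T-1))]
      apply Real.sqrt_le_sqrt
      have hcast : (msq ℓ (T-1) : ℝ) ≤ (sStar : ℝ) := by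
        exact_mod_cast hms (T-1) (Nat.sub_le T 1)
      have h1 : (0:ℝ) ≤ (T:ℝ) * Real.log d / d := by positivity
      calc (T:ℝ) * (msq ℓ (T-1)) * Real.log d / d
          = (msq ℓ (T-1) : ℝ) * ((T:ℝ) * Real.log d / d) := by ring
      _ ≤ (sStar : ℝ) * ((T:ℝ) * Real.log d / d) := by
          exact mul_le_mul_of_nonneg_right hcast h1
      _ = (T:ℝ) * sStar * Real.log d / d := by ring
    have hmid : 0 ≤ (⌈Real.logb 2 (sStar:ℝ)⌉ : ℝ) * Real.log d / 2 := by
      apply div_nonneg _ (by norm_num)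
      apply mul_nonneg _ hL.le
      exact_mod_cast Int.ceil_nonneg (Real.logb_nonneg (by norm_num) hsR)
    have hM0 : 0 ≤ Real.sqrt ((T:ℝ) * sStar * Real.log d / d) := Real.sqrt_nonneg _
    have hX0' : 0 ≤ (sStar:ℝ) * Real.sqrt (Real.log d / (d * T)) := by positivity
    have hcumT : cum ℓ T i₀ = ∑ t ∈ Finset.range T, ℓ t i₀ := rfl
    rw [lossRegret]
    linarith [hInf, hgam_sum, hmixsum, hplaysum, hlogeta, hmid, hM0, hX0',
      hcumT ▸ hgam_sum]

end
end

section
/- Let d ≥ 1, s an integer with 1 ≤ s ≤ d, T ≥ 1, η > 0 and q > 1. There exists a bandit strategy (Greedy Online Mirror Descent with the Legendre function F_q(x) = −(q/(q−1)) Σ_{i=1}^d (x^{(i)})^{1−1/q}, parameter η, and the usual importance-weighted loss estimates) such that for every sequence ℓ_1,…,ℓ_T of s-sparse loss vectors in [0,1]^d, the expected regret satisfies E[R_T] ≤ q ( d^{1/q}/(η(q−1)) + η T s^{1−1/q}/2 ). -/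
open Finset Filter Real

noncomputable section

/-- A bandit strategy maps, at each stage `t`, the history of past decisions and observed
outcomes `(d_1, ω_1^{(d_1)}, …, d_{t-1}, ω_{t-1}^{(d_{t-1})})` to a point of the simplex. -/
def IsBanditStrategy {d : ℕ} (σ : ∀ t : ℕ, (Fin t → Fin d × ℝ) → (Fin d → ℝ)) : Prop :=
  ∀ t h, (∀ i, 0 ≤ σ t h i) ∧ ∑ i, σ t h i = 1

/-- Probability that the bandit strategy `σ`, facing the loss vectors `ℓ`, produces the
decision path `p` during the first `T` stages. -/
def pathProb {d : ℕ} (σ : ∀ t : ℕ, (Fin t → Fin d × ℝ) → (Fin d → ℝ))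
    (ℓ : ℕ → Fin d → ℝ) (T : ℕ) (p : Fin T → Fin d) : ℝ :=
  ∏ t : Fin T,
    σ t (fun k => (p ⟨k, k.isLt.trans t.isLt⟩, ℓ k (p ⟨k, k.isLt.trans t.isLt⟩))) (p t)

/-- Expected regret of the bandit strategy `σ` against the loss vectors `ℓ` over `T` stages:
the expectation (over decision paths) of the cumulative incurred loss, minus the best
cumulative loss. -/
def banditExpRegret {d : ℕ} (σ : ∀ t : ℕ, (Fin t → Fin d × ℝ) → (Fin d → ℝ))
    (ℓ : ℕ → Fin d → ℝ) (T : ℕ) : ℝ :=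
  (∑ p : Fin T → Fin d, pathProb σ ℓ T p * ∑ t : Fin T, ℓ t (p t)) -
    ⨅ i, ∑ t ∈ Finset.range T, ℓ t i


open Set

/-- scalar potential `φ(z) = -(q/(q-1)) z^(1-1/q)` -/
def Bphi (q z : ℝ) : ℝ := -(q / (q - 1)) * z ^ (1 - 1/q)

/-- scalar Bregman divergence of `Bphi` -/
def BD (q a b : ℝ) : ℝ := Bphi q a - Bphi q b + b ^ (-(1/q)) * (a - b)

lemma BD_nonneg {q a b : ℝ} (hq : 1 < q) (ha : 0 ≤ a) (hb : 0 < b) : 0 ≤ BD q a b := by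
  have hq0 : (0:ℝ) < q := one_pos.trans hq
  have hq1 : (0:ℝ) < q - 1 := sub_pos.mpr hq
  set p : ℝ := 1 - 1/q with hp
  have hp0 : 0 ≤ p := by
    have : 1/q ≤ 1 := by rw [div_le_one hq0]; exact hq.le
    simp only [hp]; linarith
  have hp1 : p ≤ 1 := by
    have : 0 < 1/q := by positivity
    simp only [hp]; linarith
  have hab : -1 ≤ a/b - 1 := by
    have : 0 ≤ a/b := div_nonneg ha hb.le
    linarith
  have key := rpow_one_add_le_one_add_mul_self hab hp0 hp1
  rw [show 1 + (a/b - 1) = a/b by ring] at key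
  -- key : (a/b)^p ≤ 1 + p * (a/b - 1)
  have hbp : (0:ℝ) < b ^ p := Real.rpow_pos_of_pos hb p
  have hdiv : (a/b) ^ p = a ^ p / b ^ p := Real.div_rpow ha hb.le p
  have key2 : a ^ p ≤ (1 + p * (a/b - 1)) * b ^ p := by
    have := mul_le_mul_of_nonneg_right key hbp.le
    rwa [hdiv, div_mul_cancel₀ _ hbp.ne'] at this
  -- rewrite RHS
  have hbm : b ^ (-(1/q)) = b ^ p / b := by
    have h6 : b ^ p = b ^ (-(1/q)) * b := by
      rw [show p = -(1/q) + 1 by rw [hp]; ring, Real.rpow_add hb, Real.rpow_one]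
    rw [h6]; field_simp
  have key3 : (1 + p * (a/b - 1)) * b ^ p = b ^ p + p * (b ^ p / b) * (a - b) := by
    field_simp
  have hcp : q / (q - 1) * p = 1 := by
    simp only [hp]; field_simp
  have hc0 : 0 ≤ q / (q-1) := by positivity
  have key4 : q/(q-1) * a^p ≤ q/(q-1) * b^p + (b^p/b)*(a-b) := by
    have h5 := mul_le_mul_of_nonneg_left (key2.trans_eq key3) hc0
    calc q/(q-1)*a^p ≤ q/(q-1) * (b^p + p*(b^p/b)*(a-b)) := h5
    _ = q/(q-1)*b^p + (q/(q-1)*p)*((b^p/b)*(a-b)) := by ring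
    _ = q/(q-1)*b^p + (b^p/b)*(a-b) := by rw [hcp]; ring
  unfold BD Bphi
  rw [hbm, ← hp]
  linarith

lemma Bkey {q u v : ℝ} (hq : 1 < q) (hu : 0 < u) (huv : u ≤ v) :
    v^(1-q)/(q-1) - q*u^(1-q)/(q-1) + v*u^(-q) ≤ q/2 * u^(-q-1) * (v-u)^2 := by
  have hq1 : (0:ℝ) < q - 1 := sub_pos.mpr hq
  set k : ℝ → ℝ := fun w => q*u^(-q-1)*(w-u) + w^(-q) - u^(-q) with hk
  have hkd : ∀ w : ℝ, 0 < w → HasDerivAt k (q*u^(-q-1) + (-q)*w^(-q-1)) w := by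
    intro w hw
    have h1 : HasDerivAt (fun w : ℝ => q*u^(-q-1)*(w-u)) (q*u^(-q-1)) w := by
      simpa using (((hasDerivAt_id w).sub_const u).const_mul (q*u^(-q-1)))
    have h2 : HasDerivAt (fun w : ℝ => w^(-q)) ((-q)*w^(-q-1)) w :=
      Real.hasDerivAt_rpow_const (Or.inl hw.ne')
    exact (h1.add h2).sub_const (u^(-q))
  have hkmono : MonotoneOn k (Ici u) := by
    apply monotoneOn_of_deriv_nonneg (convex_Ici u)
    · intro w hw
      exact ((hkd w (hu.trans_le hw)).continuousAt).continuousWithinAt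
    · rw [interior_Ici]
      intro w hw
      exact ((hkd w (hu.trans hw)).differentiableAt).differentiableWithinAt
    · rw [interior_Ici]
      intro w hw
      rw [(hkd w (hu.trans hw)).deriv]
      have : w^(-q-1) ≤ u^(-q-1) :=
        Real.rpow_le_rpow_of_nonpos hu (le_of_lt hw) (by linarith)
      nlinarith [Real.rpow_pos_of_pos hu (-q-1)]
  have hku : k u = 0 := by simp [hk]
  have hknn : ∀ w, u ≤ w → 0 ≤ k w := by
    intro w hw
    rw [← hku]
    exact hkmono self_mem_Ici hw hw
  set h : ℝ → ℝ := fun w =>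
    q/2*u^(-q-1)*(w-u)^2 - (w^(1-q)/(q-1) - q*u^(1-q)/(q-1) + w*u^(-q)) with hh
  have hhd : ∀ w : ℝ, 0 < w → HasDerivAt h (k w) w := by
    intro w hw
    have h1 : HasDerivAt (fun w : ℝ => q/2*u^(-q-1)*(w-u)^2) (q*u^(-q-1)*(w-u)) w := by
      have := (((hasDerivAt_id w).sub_const u).pow 2).const_mul (q/2*u^(-q-1))
      refine this.congr_deriv ?_
      simp only [id_eq]
      ring
    have h2 : HasDerivAt (fun w : ℝ => w^(1-q)/(q-1)) ((1-q)*w^(-q)/(q-1)) w := by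
      have := (Real.hasDerivAt_rpow_const (p := 1-q) (Or.inl hw.ne')).div_const (q-1)
      refine this.congr_deriv ?_
      rw [show (1 - q - 1 : ℝ) = -q by ring]
    have h3 : HasDerivAt (fun w : ℝ => w*u^(-q)) (u^(-q)) w := by
      simpa using (hasDerivAt_id w).mul_const (u^(-q))
    have h4 := h1.sub ((h2.sub_const (q*u^(1-q)/(q-1))).add h3)
    refine h4.congr_deriv ?_
    rw [hk]
    field_simp
    ring
  have hhmono : MonotoneOn h (Ici u) := by
    apply monotoneOn_of_deriv_nonneg (convex_Ici u)
    · intro w hw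
      exact ((hhd w (hu.trans_le hw)).continuousAt).continuousWithinAt
    · rw [interior_Ici]
      intro w hw
      exact ((hhd w (hu.trans hw)).differentiableAt).differentiableWithinAt
    · rw [interior_Ici]
      intro w hw
      rw [(hhd w (hu.trans hw)).deriv]
      exact hknn w (le_of_lt hw)
  have hhu : h u = 0 := by
    have hx : u * u^(-q) = u^(1-q) := by
      rw [show (1-q : ℝ) = 1 + -q by ring, Real.rpow_add hu, Real.rpow_one]
    simp only [hh, sub_self]
    rw [hx]
    field_simp
    ring
  have := hhmono self_mem_Ici (mem_Ici.mpr huv) huv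
  rw [hhu] at this
  simp only [hh] at this
  linarith

lemma Bexists_lam {d : ℕ} {q : ℝ} (hq : 1 < q) (hd : 0 < d) (b : Fin d → ℝ)
    (hb : ∀ j, 0 < b j) (hsum : ∑ j, (b j)^(-q) ≤ 1) :
    ∃ l, 0 ≤ l ∧ (∀ j, l < b j) ∧ ∑ j, (b j - l)^(-q) = 1 := by
  haveI : Nonempty (Fin d) := Fin.pos_iff_nonempty.mp hd
  have hne : (Finset.univ : Finset (Fin d)).Nonempty := univ_nonempty
  set m := Finset.univ.inf' hne b with hm
  obtain ⟨j0, -, hj0⟩ := Finset.exists_mem_eq_inf' hne b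
  have hm0 : 0 < m := by rw [hm, hj0]; exact hb j0
  have hmle : ∀ j, m ≤ b j := fun j => Finset.inf'_le b (mem_univ j)
  set ε := min 1 (m/2) with hεdef
  have hε : 0 < ε := lt_min one_pos (by linarith)
  have hε1 : ε ≤ 1 := min_le_left _ _
  have hεm : ε ≤ m/2 := min_le_right _ _
  have hint : (0:ℝ) ≤ m - ε := by linarith
  set f : ℝ → ℝ := fun l => ∑ j, (b j - l)^(-q) with hf
  have hbase : ∀ j, ∀ l ∈ Icc (0:ℝ) (m-ε), 0 < b j - l := by
    intro j l hl
    have := hmle j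
    have := hl.2
    simp only [Set.mem_Icc] at hl
    linarith [hl.2]
  have hcont : ContinuousOn f (Icc 0 (m-ε)) := by
    apply continuousOn_finset_sum
    intro j _
    intro l hl
    have hbl : b j - l ≠ 0 := ne_of_gt (hbase j l hl)
    exact (((Real.continuousAt_rpow_const _ _ (Or.inl hbl)).comp
      ((continuous_const.sub continuous_id).continuousAt))).continuousWithinAt
  have hf0 : f 0 ≤ 1 := by simpa [hf] using hsum
  have hf1 : 1 ≤ f (m-ε) := by
    have h1 : (b j0 - (m-ε)) ^ (-q) = ε ^ (-q) := by
      rw [← hj0, hm]; ring_nf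
    have h2 : (1:ℝ) ≤ ε ^ (-q) :=
      Real.one_le_rpow_of_pos_of_le_one_of_nonpos hε hε1 (by linarith)
    have h3 : ∀ j ∈ Finset.univ, 0 ≤ (b j - (m-ε)) ^ (-q) := fun j _ =>
      Real.rpow_nonneg (hbase j (m-ε) (right_mem_Icc.mpr hint)).le _
    calc (1:ℝ) ≤ (b j0 - (m-ε)) ^ (-q) := by rw [h1]; exact h2
    _ ≤ f (m-ε) := Finset.single_le_sum h3 (mem_univ j0)
  have := intermediate_value_Icc hint hcont
  obtain ⟨l, hlmem, hfl⟩ := this ⟨hf0, hf1⟩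
  refine ⟨l, hlmem.1, fun j => ?_, hfl⟩
  have := hmle j
  have := hlmem.2
  linarith

def BGood {d : ℕ} (x : Fin d → ℝ) : Prop := (∀ j, 0 < x j) ∧ ∑ j, x j = 1

def Bbase {d : ℕ} (η q : ℝ) (x : Fin d → ℝ) (a : Fin d) (o : ℝ) : Fin d → ℝ :=
  fun j => x j ^ (-(1/q)) + (if j = a then η * max 0 o / x a else 0)

open Classical in
def Blam {d : ℕ} (η q : ℝ) (x : Fin d → ℝ) (a : Fin d) (o : ℝ) : ℝ :=
  if h : ∃ l, 0 ≤ l ∧ (∀ j, l < Bbase η q x a o j) ∧ ∑ j, (Bbase η q x a o j - l)^(-q) = 1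
  then h.choose else 0

def Bstep {d : ℕ} (η q : ℝ) (x : Fin d → ℝ) (a : Fin d) (o : ℝ) : Fin d → ℝ :=
  fun j => (Bbase η q x a o j - Blam η q x a o) ^ (-q)

lemma Brpow_inv1 {q z : ℝ} (hq : q ≠ 0) (hz : 0 < z) : (z ^ (-(1/q))) ^ (-q) = z := by
  rw [← Real.rpow_mul hz.le]
  rw [show -(1/q) * -q = 1 by field_simp]
  exact Real.rpow_one z

lemma Brpow_inv2 {q z : ℝ} (hq : q ≠ 0) (hz : 0 < z) : (z ^ (-q)) ^ (-(1/q)) = z := by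
  rw [← Real.rpow_mul hz.le]
  rw [show -q * -(1/q) = 1 by field_simp]
  exact Real.rpow_one z

lemma Bbase_pos {d : ℕ} {η q : ℝ} (hη : 0 ≤ η) {x : Fin d → ℝ} (hx : ∀ j, 0 < x j)
    (a : Fin d) (o : ℝ) (j : Fin d) : 0 < Bbase η q x a o j := by
  have h1 : 0 < x j ^ (-(1/q)) := Real.rpow_pos_of_pos (hx j) _
  have h2 : 0 ≤ η * max 0 o / x a :=
    div_nonneg (mul_nonneg hη (le_max_left 0 o)) (hx a).le
  unfold Bbase
  split <;> linarith

lemma Bbase_sum_le {d : ℕ} {η q : ℝ} (hq : 1 < q) (hη : 0 ≤ η) {x : Fin d → ℝ}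
    (hx : BGood x) (a : Fin d) (o : ℝ) : ∑ j, (Bbase η q x a o j)^(-q) ≤ 1 := by
  have hq0 : q ≠ 0 := by positivity
  rw [← hx.2]
  apply Finset.sum_le_sum
  intro j _
  have h1 : 0 < x j ^ (-(1/q)) := Real.rpow_pos_of_pos (hx.1 j) _
  have h2 : x j ^ (-(1/q)) ≤ Bbase η q x a o j := by
    unfold Bbase
    have : 0 ≤ η * max 0 o / x a := div_nonneg (mul_nonneg hη (le_max_left 0 o)) (hx.1 a).le
    split <;> linarith
  calc (Bbase η q x a o j)^(-q) ≤ (x j ^ (-(1/q)))^(-q) :=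
        Real.rpow_le_rpow_of_nonpos h1 h2 (by linarith)
  _ = x j := Brpow_inv1 hq0 (hx.1 j)

lemma Blam_spec {d : ℕ} {η q : ℝ} (hq : 1 < q) (hη : 0 < η) {x : Fin d → ℝ}
    {a : Fin d} {o : ℝ} (hx : BGood x) :
    0 ≤ Blam η q x a o ∧ (∀ j, Blam η q x a o < Bbase η q x a o j) ∧
      ∑ j, (Bbase η q x a o j - Blam η q x a o)^(-q) = 1 := by
  have hd : 0 < d := by
    rcases Nat.eq_zero_or_pos d with h | h
    · subst h; simpa using hx.2
    · exact h
  have hex : ∃ l, 0 ≤ l ∧ (∀ j, l < Bbase η q x a o j) ∧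
      ∑ j, (Bbase η q x a o j - l)^(-q) = 1 :=
    Bexists_lam hq hd _ (Bbase_pos hη.le hx.1 a o) (Bbase_sum_le hq hη.le hx a o)
  unfold Blam
  rw [dif_pos hex]
  exact hex.choose_spec

lemma Bstep_good {d : ℕ} {η q : ℝ} (hq : 1 < q) (hη : 0 < η) {x : Fin d → ℝ}
    (hx : BGood x) (a : Fin d) (o : ℝ) : BGood (Bstep η q x a o) := by
  obtain ⟨h0, hlt, hsum⟩ := Blam_spec hq hη hx (a := a) (o := o)
  exact ⟨fun j => Real.rpow_pos_of_pos (sub_pos.mpr (hlt j)) _, hsum⟩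

def BX (d : ℕ) (η q : ℝ) : ∀ t : ℕ, (Fin t → Fin d × ℝ) → Fin d → ℝ
  | 0, _ => fun _ => (d:ℝ)⁻¹
  | (t+1), h => Bstep η q (BX d η q t (fun k => h k.castSucc)) (h (Fin.last t)).1 (h (Fin.last t)).2

lemma BX_good {d : ℕ} {η q : ℝ} (hd : 0 < d) (hq : 1 < q) (hη : 0 < η) :
    ∀ t h, BGood (BX d η q t h) := by
  intro t
  induction t with
  | zero =>
    intro h
    constructor
    · intro j
      simp [BX]
      positivity
    · simp [BX, Finset.sum_const, Finset.card_univ]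
      field_simp
  | succ t ih =>
    intro h
    exact Bstep_good hq hη (ih _) _ _

lemma Brpow_inv3 {q z : ℝ} (hq : q ≠ 0) (hz : 0 < z) : (z ^ (-q)) ^ (1-1/q) = z ^ (1-q) := by
  rw [← Real.rpow_mul hz.le]
  congr 1
  field_simp
  ring

lemma Bstep_regret {d : ℕ} {η q : ℝ} (hq : 1 < q) (hη : 0 < η)
    {x u : Fin d → ℝ} (hx : BGood x) (hu : ∀ j, 0 ≤ u j) (hus : ∑ j, u j = 1)
    (a : Fin d) {o : ℝ} (ho0 : 0 ≤ o) (ho1 : o ≤ 1) :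
    η * (o - o / x a * u a) ≤
      (∑ j, BD q (u j) (x j)) - (∑ j, BD q (u j) (Bstep η q x a o j))
        + q*η^2/2 * o^2 * (x a)^(1/q - 1) := by
  have hq0 : (0:ℝ) < q := one_pos.trans hq
  have hqne : q ≠ 0 := hq0.ne'
  have hq1 : (0:ℝ) < q - 1 := sub_pos.mpr hq
  obtain ⟨hl0, hlb, hsum'⟩ := Blam_spec hq hη hx (a := a) (o := o)
  set l := Blam η q x a o with hl
  set b := Bbase η q x a o with hbdef
  set x' := Bstep η q x a o with hx'def
  set w : Fin d → ℝ := fun j => (b j) ^ (-q) with hw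
  have hmax : max 0 o = o := max_eq_right ho0
  set δ := η * o / x a with hδ
  have hδ0 : 0 ≤ δ := div_nonneg (mul_nonneg hη.le ho0) (hx.1 a).le
  have hbj : ∀ j, b j = x j ^ (-(1/q)) + (if j = a then δ else 0) := by
    intro j
    rw [hbdef]
    unfold Bbase
    rw [hmax]
  have hbpos : ∀ j, 0 < b j := Bbase_pos hη.le hx.1 a o
  have hx'pos : ∀ j, 0 < x' j := (Bstep_good hq hη hx a o).1
  have hwj : ∀ j, w j = (b j) ^ (-q) := fun j => rfl
  have hwpos : ∀ j, 0 < w j := fun j => Real.rpow_pos_of_pos (hbpos j) _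
  have hwinv : ∀ j, (w j) ^ (-(1/q)) = b j := fun j => Brpow_inv2 hqne (hbpos j)
  have hx'eq : ∀ j, x' j = (b j - l) ^ (-q) := fun j => rfl
  have hx'inv : ∀ j, (x' j) ^ (-(1/q)) = b j - l := by
    intro j
    rw [hx'eq j]
    exact Brpow_inv2 hqne (sub_pos.mpr (hlb j))
  have hsx' : ∑ j, x' j = 1 := hsum'
  -- identity I1
  have hI1coord : ∀ j, BD q (u j) (x j) - BD q (u j) (w j) + BD q (x j) (w j)
      = (x j ^ (-(1/q)) - b j) * (u j - x j) := by
    intro j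
    unfold BD
    rw [hwinv j]
    ring
  have hI1 : (∑ j, BD q (u j) (x j)) - (∑ j, BD q (u j) (w j)) + (∑ j, BD q (x j) (w j))
      = η * (o - o / x a * u a) := by
    have h1 : ∑ j, (BD q (u j) (x j) - BD q (u j) (w j) + BD q (x j) (w j))
        = ∑ j, ((x j ^ (-(1/q)) - b j) * (u j - x j)) :=
      Finset.sum_congr rfl (fun j _ => hI1coord j)
    rw [Finset.sum_add_distrib, Finset.sum_sub_distrib] at h1
    rw [h1, Finset.sum_eq_single a]
    · rw [hbj a, if_pos rfl]
      have hxa : x a ≠ 0 := (hx.1 a).ne'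
      rw [hδ]
      field_simp
      ring
    · intro j _ hj
      rw [hbj j, if_neg hj]
      ring
    · intro h
      exact absurd (Finset.mem_univ a) h
  -- inequality I2
  have hI2coord : ∀ j, BD q (u j) (w j) - BD q (u j) (x' j)
      = BD q (x' j) (w j) + l * (u j - x' j) := by
    intro j
    unfold BD
    rw [hwinv j, hx'inv j]
    ring
  have hI2 : (∑ j, BD q (u j) (x' j)) ≤ ∑ j, BD q (u j) (w j) := by
    have hs : (∑ j, BD q (u j) (w j)) - (∑ j, BD q (u j) (x' j))
        = (∑ j, BD q (x' j) (w j)) + l * ((∑ j, u j) - (∑ j, x' j)) := by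
      have h2 : ∑ j, (BD q (u j) (w j) - BD q (u j) (x' j))
          = ∑ j, (BD q (x' j) (w j) + l * (u j - x' j)) :=
        Finset.sum_congr rfl (fun j _ => hI2coord j)
      rw [Finset.sum_sub_distrib, Finset.sum_add_distrib] at h2
      rw [h2, ← Finset.mul_sum, Finset.sum_sub_distrib]
    rw [hus, hsx'] at hs
    have hnn : 0 ≤ ∑ j, BD q (x' j) (w j) :=
      Finset.sum_nonneg fun j _ => BD_nonneg hq (hx'pos j).le (hwpos j)
    simp only [sub_self, mul_zero, add_zero] at hs
    linarith
  -- inequality I3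
  have hI3 : (∑ j, BD q (x j) (w j)) ≤ q*η^2/2 * o^2 * (x a)^(1/q - 1) := by
    rw [Finset.sum_eq_single a]
    · -- the main coordinate
      set u₀ := x a ^ (-(1/q)) with hu₀
      have hu₀pos : 0 < u₀ := Real.rpow_pos_of_pos (hx.1 a) _
      have hba : b a = u₀ + δ := by rw [hbj a, if_pos rfl]
      have hv₀pos : 0 < u₀ + δ := by linarith
      have hxa_eq : x a = u₀ ^ (-q) := (Brpow_inv1 hqne (hx.1 a)).symm
      have hBD : BD q (x a) (w a) =
          (u₀+δ)^(1-q)/(q-1) - q*u₀^(1-q)/(q-1) + (u₀+δ)*u₀^(-q) := by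
        unfold BD Bphi
        rw [hwinv a, hwj a, hba]
        rw [hxa_eq, Brpow_inv3 hqne hu₀pos, Brpow_inv3 hqne hv₀pos]
        have hv1 : (u₀+δ) * (u₀+δ)^(-q) = (u₀+δ)^(1-q) := by
          rw [show (1-q:ℝ) = 1 + -q by ring, Real.rpow_add hv₀pos, Real.rpow_one]
        have hms : (u₀+δ)*(u₀^(-q) - (u₀+δ)^(-q)) = (u₀+δ)*u₀^(-q) - (u₀+δ)^(1-q) := by
          rw [mul_sub, hv1]
        rw [hms]
        field_simp
        ring
      have hkey := Bkey hq hu₀pos (le_add_of_nonneg_right hδ0 : u₀ ≤ u₀ + δ)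
      rw [hBD]
      have hexp : u₀ ^ (-q-1) = (x a) ^ (1/q + 1) := by
        rw [hu₀, ← Real.rpow_mul (hx.1 a).le]
        congr 1
        field_simp
        ring
      have hsplit : (x a) ^ (1/q + 1) = (x a) ^ (1/q - 1) * (x a)^2 := by
        rw [show (1/q + 1 : ℝ) = (1/q - 1) + ((2:ℕ):ℝ) by push_cast; ring,
          Real.rpow_add (hx.1 a), Real.rpow_natCast]
      have hδsq : ((u₀ + δ) - u₀)^2 = η^2 * o^2 / (x a)^2 := by
        rw [hδ]
        field_simp
        ring
      rw [hexp, hsplit, hδsq] at hkey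
      have hxane : (x a) ≠ 0 := (hx.1 a).ne'
      calc (u₀+δ)^(1-q)/(q-1) - q*u₀^(1-q)/(q-1) + (u₀+δ)*u₀^(-q)
          ≤ q / 2 * ((x a)^(1/q-1) * (x a)^2) * (η^2*o^2/(x a)^2) := hkey
        _ = q*η^2/2 * o^2 * (x a)^(1/q - 1) := by field_simp
    · intro j _ hj
      have hwx : w j = x j := by
        rw [hwj j, hbj j, if_neg hj, add_zero]
        exact Brpow_inv1 hqne (hx.1 j)
      rw [hwx]
      unfold BD
      simp
    · intro h
      exact absurd (Finset.mem_univ a) h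
  linarith

lemma Bphi_nonpos {q z : ℝ} (hq : 1 < q) (hz : 0 ≤ z) : Bphi q z ≤ 0 := by
  unfold Bphi
  have h1 : 0 ≤ z ^ (1 - 1/q) := Real.rpow_nonneg hz _
  have h2 : 0 < q / (q-1) := div_pos (one_pos.trans hq) (sub_pos.mpr hq)
  nlinarith

lemma BDvec_start {d : ℕ} {q : ℝ} (hq : 1 < q) (hd : 0 < d) {u : Fin d → ℝ}
    (hu : ∀ j, 0 ≤ u j) (hus : ∑ j, u j = 1) :
    ∑ j, BD q (u j) ((d:ℝ)⁻¹) ≤ q/(q-1) * (d:ℝ)^(1/q) := by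
  have hdpos : (0:ℝ) < (d:ℝ) := by exact_mod_cast hd
  set c : ℝ := (d:ℝ)⁻¹ with hc
  set K : ℝ := ((d:ℝ)⁻¹) ^ (-(1/q)) with hK
  have hterm : ∀ j, BD q (u j) c ≤ (-Bphi q c - K * c) + K * u j := by
    intro j
    have hid : BD q (u j) c = Bphi q (u j) + ((-Bphi q c - K * c) + K * u j) := by
      unfold BD
      rw [← hK]
      ring
    have := Bphi_nonpos hq (hu j)
    linarith [hid.le, hid.ge]
  calc ∑ j, BD q (u j) c ≤ ∑ j, ((-Bphi q c - K * c) + K * u j) :=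
        Finset.sum_le_sum (fun j _ => hterm j)
    _ = (d:ℝ) * (-Bphi q c - K * c) + K * (∑ j, u j) := by
        rw [Finset.sum_add_distrib, ← Finset.mul_sum, Finset.sum_const, Finset.card_univ,
          Fintype.card_fin, nsmul_eq_mul]
    _ = (d:ℝ) * (-Bphi q c) - K * ((d:ℝ) * c) + K := by rw [hus]; ring
    _ = q/(q-1) * (d:ℝ)^(1/q) := by
        have hdc : (d:ℝ) * c = 1 := by rw [hc]; field_simp
        rw [hdc]
        have hphic : -Bphi q c = q/(q-1) * ((d:ℝ)⁻¹)^(1-1/q) := by unfold Bphi; rw [hc]; ring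
        have hpow : ((d:ℝ)⁻¹)^(1-1/q) = (d:ℝ)^(1/q - 1) := by
          rw [← Real.rpow_neg_one (d:ℝ), ← Real.rpow_mul hdpos.le]
          congr 1
          ring
        have hfin : (d:ℝ) * (d:ℝ)^(1/q - 1) = (d:ℝ)^(1/q) := by
          nth_rewrite 1 [← Real.rpow_one (d:ℝ)]
          rw [← Real.rpow_add hdpos]
          congr 1
          ring
        rw [hphic, hpow,
          show (d:ℝ) * (q/(q-1) * (d:ℝ)^(1/q-1)) = q/(q-1) * ((d:ℝ) * (d:ℝ)^(1/q-1)) by ring,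
          hfin]
        ring

lemma Bholder {d s : ℕ} {q : ℝ} (hq : 1 < q) {x : Fin d → ℝ} (hx : BGood x)
    {v : Fin d → ℝ} (hv : ∀ j, v j ∈ Set.Icc (0:ℝ) 1) (hsp : Set.ncard {j | v j ≠ 0} ≤ s) :
    ∑ j, (v j)^2 * (x j)^(1/q) ≤ (s:ℝ)^(1-1/q) := by
  classical
  have hq0 : (0:ℝ) < q := one_pos.trans hq
  have hexp0 : (0:ℝ) ≤ 1 - 1/q := by
    have : 1/q ≤ 1 := by rw [div_le_one hq0]; exact hq.le
    linarith
  set S : Finset (Fin d) := Finset.univ.filter (fun j => v j ≠ 0) with hS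
  have hcard : (S.card : ℝ) ≤ (s:ℝ) := by
    have h1 : {j | v j ≠ 0}.ncard = S.card := by
      rw [hS, ← Set.toFinset_setOf]
      exact Set.ncard_eq_toFinset_card' _
    exact_mod_cast h1 ▸ hsp
  have hsum_eq : ∑ j, (v j)^2 * (x j)^(1/q) = ∑ j ∈ S, (v j)^2 * (x j)^(1/q) := by
    symm
    apply Finset.sum_subset (Finset.subset_univ S)
    intro j _ hj
    have : v j = 0 := by
      by_contra hne
      exact hj (Finset.mem_filter.mpr ⟨Finset.mem_univ j, hne⟩)
    simp [this]
  rw [hsum_eq]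
  have hstep1 : ∑ j ∈ S, (v j)^2 * (x j)^(1/q) ≤ ∑ j ∈ S, (x j)^(1/q) := by
    apply Finset.sum_le_sum
    intro j _
    have h1 : (v j)^2 ≤ 1 := by nlinarith [(hv j).1, (hv j).2]
    have h2 : 0 ≤ (x j)^(1/q) := (Real.rpow_pos_of_pos (hx.1 j) _).le
    nlinarith
  rcases Finset.eq_empty_or_nonempty S with hSe | hSne
  · rw [hSe]
    simp only [Finset.sum_empty]
    calc ∑ j ∈ (∅: Finset (Fin d)), (v j)^2 * (x j)^(1/q) = 0 := Finset.sum_empty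
      _ ≤ (s:ℝ)^(1-1/q) := Real.rpow_nonneg (Nat.cast_nonneg s) _
  · set N : ℝ := (S.card : ℝ) with hN
    have hN0 : 0 < N := by
      rw [hN]
      exact_mod_cast Finset.card_pos.mpr hSne
    have hw : ∀ j ∈ S, (0:ℝ) ≤ N⁻¹ := fun _ _ => (inv_pos.mpr hN0).le
    have hw' : ∑ _j ∈ S, N⁻¹ = 1 := by
      rw [Finset.sum_const, nsmul_eq_mul, hN]
      field_simp
    have hz : ∀ j ∈ S, (0:ℝ) ≤ (x j)^(1/q) := fun j _ => (Real.rpow_pos_of_pos (hx.1 j) _).le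
    have hmean := Real.arith_mean_le_rpow_mean S (fun _ => N⁻¹) (fun j => (x j)^(1/q))
      hw hw' hz hq.le
    have hzq : ∀ j, ((x j)^(1/q))^q = x j := by
      intro j
      rw [← Real.rpow_mul (hx.1 j).le]
      rw [show 1/q * q = 1 by field_simp]
      exact Real.rpow_one _
    simp only [hzq] at hmean
    -- hmean : ∑ j in S, N⁻¹ * (x j)^(1/q) ≤ (∑ j in S, N⁻¹ * x j)^(1/q)
    have hsx : ∑ j ∈ S, N⁻¹ * x j = N⁻¹ * ∑ j ∈ S, x j := by rw [Finset.mul_sum]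
    have hsx1 : ∑ j ∈ S, x j ≤ 1 := by
      rw [← hx.2]
      exact Finset.sum_le_sum_of_subset_of_nonneg (Finset.subset_univ S)
        (fun j _ _ => (hx.1 j).le)
    have hb1 : (∑ j ∈ S, N⁻¹ * x j)^(1/q) ≤ (N⁻¹)^(1/q) := by
      rw [hsx]
      apply Real.rpow_le_rpow
      · exact mul_nonneg (inv_pos.mpr hN0).le
          (Finset.sum_nonneg (fun j _ => (hx.1 j).le))
      · nth_rewrite 2 [← mul_one N⁻¹]
        apply mul_le_mul_of_nonneg_left hsx1 (inv_pos.mpr hN0).le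
      · positivity
    have hpull : ∑ j ∈ S, N⁻¹ * (x j)^(1/q) = N⁻¹ * ∑ j ∈ S, (x j)^(1/q) := by
      rw [Finset.mul_sum]
    rw [hpull] at hmean
    have hfin : ∑ j ∈ S, (x j)^(1/q) ≤ N * (N⁻¹)^(1/q) := by
      have := mul_le_mul_of_nonneg_left (hmean.trans hb1) hN0.le
      rwa [← mul_assoc, mul_inv_cancel₀ hN0.ne', one_mul] at this
    have hNpow : N * (N⁻¹)^(1/q) = N^(1-1/q) := by
      rw [← Real.rpow_neg_one N, ← Real.rpow_mul hN0.le]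
      nth_rewrite 1 [← Real.rpow_one N]
      rw [← Real.rpow_add hN0]
      congr 1
      ring
    have hlast : N^(1-1/q) ≤ (s:ℝ)^(1-1/q) := Real.rpow_le_rpow hN0.le hcard hexp0
    calc ∑ j ∈ S, (v j)^2 * (x j)^(1/q) ≤ ∑ j ∈ S, (x j)^(1/q) := hstep1
      _ ≤ N * (N⁻¹)^(1/q) := hfin
      _ = N^(1-1/q) := hNpow
      _ ≤ (s:ℝ)^(1-1/q) := hlast

lemma Bmean {d s : ℕ} {η q : ℝ} (hq : 1 < q) (hη : 0 < η) {x u : Fin d → ℝ} (hx : BGood x)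
    (hu : ∀ j, 0 ≤ u j) {v : Fin d → ℝ} (hv : ∀ j, v j ∈ Set.Icc (0:ℝ) 1)
    (hsp : Set.ncard {j | v j ≠ 0} ≤ s) :
    ∑ a, x a * (v a / x a * u a + q*η/2 * (v a)^2 * (x a)^(1/q - 1))
      ≤ (∑ j, v j * u j) + q*η/2 * (s:ℝ)^(1-1/q) := by
  have hterm : ∀ a, x a * (v a / x a * u a + q*η/2 * (v a)^2 * (x a)^(1/q - 1))
      = v a * u a + q*η/2 * ((v a)^2 * (x a)^(1/q)) := by
    intro a
    have hxa : x a ≠ 0 := (hx.1 a).ne'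
    have hxp : x a * (x a)^(1/q - 1) = (x a)^(1/q) := by
      nth_rewrite 1 [← Real.rpow_one (x a)]
      rw [← Real.rpow_add (hx.1 a)]
      congr 1
      ring
    have h1 : x a * (v a / x a * u a) = v a * u a := by field_simp
    calc x a * (v a / x a * u a + q*η/2 * (v a)^2 * (x a)^(1/q - 1))
        = x a * (v a / x a * u a) + q*η/2 * (v a)^2 * (x a * (x a)^(1/q-1)) := by ring
      _ = v a * u a + q*η/2 * ((v a)^2 * (x a)^(1/q)) := by rw [h1, hxp]; ring
  rw [Finset.sum_congr rfl (fun a _ => hterm a), Finset.sum_add_distrib, ← Finset.mul_sum]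
  have := Bholder (s := s) hq hx hv hsp
  have hc : 0 ≤ q*η/2 := by positivity
  nlinarith [mul_le_mul_of_nonneg_left this hc]

def Bxp (d : ℕ) (η q : ℝ) (ℓ : ℕ → Fin d → ℝ) (p : ℕ → Fin d) (t : ℕ) : Fin d → ℝ :=
  BX d η q t (fun k : Fin t => (p k, ℓ k (p k)))

lemma Bxp_zero (d : ℕ) (η q : ℝ) (ℓ : ℕ → Fin d → ℝ) (p : ℕ → Fin d) :
    Bxp d η q ℓ p 0 = fun _ => (d:ℝ)⁻¹ := rfl

lemma Bxp_succ (d : ℕ) (η q : ℝ) (ℓ : ℕ → Fin d → ℝ) (p : ℕ → Fin d) (t : ℕ) :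
    Bxp d η q ℓ p (t+1) = Bstep η q (Bxp d η q ℓ p t) (p t) (ℓ t (p t)) := rfl

lemma Bmaster {d : ℕ} {η q : ℝ} (hd : 0 < d) (hq : 1 < q) (hη : 0 < η)
    (ℓ : ℕ → Fin d → ℝ) (hℓ : ∀ t j, ℓ t j ∈ Set.Icc (0:ℝ) 1)
    (p : ℕ → Fin d) {u : Fin d → ℝ} (hu : ∀ j, 0 ≤ u j) (hus : ∑ j, u j = 1) (T : ℕ) :
    ∑ t ∈ Finset.range T, (ℓ t (p t) -
      (ℓ t (p t) / Bxp d η q ℓ p t (p t) * u (p t)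
        + q*η/2 * (ℓ t (p t))^2 * (Bxp d η q ℓ p t (p t))^(1/q - 1)))
      ≤ q * (d:ℝ)^(1/q) / (η * (q - 1)) := by
  have hq1 : (0:ℝ) < q - 1 := sub_pos.mpr hq
  set D : ℕ → ℝ := fun t => ∑ j, BD q (u j) (Bxp d η q ℓ p t j) with hD
  have hgood : ∀ t, BGood (Bxp d η q ℓ p t) := fun t => BX_good hd hq hη t _
  have hstep : ∀ t, η * (ℓ t (p t) -
      (ℓ t (p t) / Bxp d η q ℓ p t (p t) * u (p t)
        + q*η/2 * (ℓ t (p t))^2 * (Bxp d η q ℓ p t (p t))^(1/q - 1)))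
      ≤ D t - D (t+1) := by
    intro t
    have h0 := Bstep_regret hq hη (hgood t) hu hus (p t) (hℓ t (p t)).1 (hℓ t (p t)).2
    rw [show Bstep η q (Bxp d η q ℓ p t) (p t) (ℓ t (p t)) = Bxp d η q ℓ p (t+1) from
      (Bxp_succ d η q ℓ p t).symm] at h0
    have hid : η * (ℓ t (p t) -
        (ℓ t (p t) / Bxp d η q ℓ p t (p t) * u (p t)
          + q*η/2 * (ℓ t (p t))^2 * (Bxp d η q ℓ p t (p t))^(1/q - 1)))
        = η * (ℓ t (p t) - ℓ t (p t) / Bxp d η q ℓ p t (p t) * u (p t))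
          - q*η^2/2 * (ℓ t (p t))^2 * (Bxp d η q ℓ p t (p t))^(1/q - 1) := by ring
    rw [hid]
    have h1 := h0
    simp only [hD]
    linarith
  have htel : ∑ t ∈ Finset.range T, (D t - D (t+1)) = D 0 - D T := Finset.sum_range_sub' D T
  have hsum : η * (∑ t ∈ Finset.range T, (ℓ t (p t) -
      (ℓ t (p t) / Bxp d η q ℓ p t (p t) * u (p t)
        + q*η/2 * (ℓ t (p t))^2 * (Bxp d η q ℓ p t (p t))^(1/q - 1)))) ≤ D 0 - D T := by
    rw [Finset.mul_sum]
    calc ∑ t ∈ Finset.range T, η * (ℓ t (p t) -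
        (ℓ t (p t) / Bxp d η q ℓ p t (p t) * u (p t)
          + q*η/2 * (ℓ t (p t))^2 * (Bxp d η q ℓ p t (p t))^(1/q - 1)))
        ≤ ∑ t ∈ Finset.range T, (D t - D (t+1)) := Finset.sum_le_sum (fun t _ => hstep t)
      _ = D 0 - D T := htel
  have hD0 : D 0 ≤ q/(q-1) * (d:ℝ)^(1/q) := by
    have : D 0 = ∑ j, BD q (u j) ((d:ℝ)⁻¹) := by
      simp only [hD, Bxp_zero]
    rw [this]
    exact BDvec_start hq hd hu hus
  have hDT : 0 ≤ D T :=
    Finset.sum_nonneg fun j _ => BD_nonneg hq (hu j) ((hgood T).1 j)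
  rw [show q * (d:ℝ)^(1/q) / (η * (q - 1)) = (q/(q-1) * (d:ℝ)^(1/q))/η by field_simp]
  rw [le_div_iff₀ hη]
  nlinarith [hsum]

def BsnocEquiv (d n : ℕ) : ((Fin n → Fin d) × Fin d) ≃ (Fin (n+1) → Fin d) where
  toFun := fun pi => Fin.snoc pi.1 pi.2
  invFun := fun p => (Fin.init p, p (Fin.last n))
  left_inv := fun pi => by simp
  right_inv := fun p => by simp

lemma Bsum_snoc {d n : ℕ} (F : (Fin (n+1) → Fin d) → ℝ) :
    ∑ p : Fin (n+1) → Fin d, F p = ∑ pp : Fin n → Fin d, ∑ i, F (Fin.snoc pp i) := by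
  calc ∑ p : Fin (n+1) → Fin d, F p
      = ∑ pi : (Fin n → Fin d) × Fin d, F (Fin.snoc pi.1 pi.2) :=
        (Fintype.sum_equiv (BsnocEquiv d n) (fun pi => F (Fin.snoc pi.1 pi.2)) F
          (fun pi => rfl)).symm
    _ = ∑ pp : Fin n → Fin d, ∑ i, F (Fin.snoc pp i) := Fintype.sum_prod_type _

lemma Bsnoc_mk {d n : ℕ} (pp : Fin n → Fin d) (i : Fin d) (m : ℕ) (h1 : m < n) (h2 : m < n+1) :
    (Fin.snoc pp i : Fin (n+1) → Fin d) ⟨m, h2⟩ = pp ⟨m, h1⟩ := by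
  have h3 : (⟨m, h2⟩ : Fin (n+1)) = Fin.castSucc ⟨m, h1⟩ := rfl
  rw [h3, Fin.snoc_castSucc]

lemma BpathProb_snoc {d : ℕ} (σ : ∀ t : ℕ, (Fin t → Fin d × ℝ) → (Fin d → ℝ))
    (ℓ : ℕ → Fin d → ℝ) (n : ℕ) (pp : Fin n → Fin d) (i : Fin d) :
    pathProb σ ℓ (n+1) (Fin.snoc pp i)
      = pathProb σ ℓ n pp * σ n (fun k => (pp k, ℓ k (pp k))) i := by
  unfold pathProb
  rw [Fin.prod_univ_castSucc]
  congr 1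
  · apply Finset.prod_congr rfl
    intro t _
    congr 1
    · funext k
      rw [Bsnoc_mk pp i ↑k (k.isLt.trans t.isLt)]
    · exact Fin.snoc_castSucc _ _ _
  · congr 1
    · funext k
      rw [Bsnoc_mk pp i ↑k k.isLt]
      congr 1 <;> rw [Fin.eta]
    · exact Fin.snoc_last _ _

lemma BpathProb_nonneg {d : ℕ} {σ : ∀ t : ℕ, (Fin t → Fin d × ℝ) → (Fin d → ℝ)}
    (hσ : IsBanditStrategy σ) (ℓ : ℕ → Fin d → ℝ) (n : ℕ) (p : Fin n → Fin d) :
    0 ≤ pathProb σ ℓ n p :=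
  Finset.prod_nonneg fun t _ => (hσ _ _).1 _

lemma Bmass {d : ℕ} {σ : ∀ t : ℕ, (Fin t → Fin d × ℝ) → (Fin d → ℝ)}
    (hσ : IsBanditStrategy σ) (ℓ : ℕ → Fin d → ℝ) :
    ∀ n, ∑ p : Fin n → Fin d, pathProb σ ℓ n p = 1 := by
  intro n
  induction n with
  | zero =>
    have h1 : ∀ p : Fin 0 → Fin d, pathProb σ ℓ 0 p = 1 := by
      intro p
      unfold pathProb
      simp
    rw [Finset.sum_congr rfl (fun p _ => h1 p), Finset.sum_const, Finset.card_univ]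
    simp
  | succ n ih =>
    rw [Bsum_snoc (fun p => pathProb σ ℓ (n+1) p)]
    have h2 : ∀ pp : Fin n → Fin d,
        ∑ i, pathProb σ ℓ (n+1) (Fin.snoc pp i) = pathProb σ ℓ n pp := by
      intro pp
      rw [Finset.sum_congr rfl (fun i _ => BpathProb_snoc σ ℓ n pp i), ← Finset.mul_sum,
        (hσ n _).2, mul_one]
    rw [Finset.sum_congr rfl (fun pp _ => h2 pp)]
    exact ih

def BxAt (d : ℕ) (η q : ℝ) (ℓ : ℕ → Fin d → ℝ) {n : ℕ} (p : Fin n → Fin d) (t : Fin n) :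
    Fin d → ℝ :=
  BX d η q ↑t (fun k : Fin ↑t => (p ⟨↑k, k.isLt.trans t.isLt⟩, ℓ ↑k (p ⟨↑k, k.isLt.trans t.isLt⟩)))

lemma BxAt_snoc_lt {d n : ℕ} (η q : ℝ) (ℓ : ℕ → Fin d → ℝ) (pp : Fin n → Fin d) (i : Fin d)
    (t : Fin n) : BxAt d η q ℓ (Fin.snoc pp i) (Fin.castSucc t) = BxAt d η q ℓ pp t := by
  unfold BxAt
  simp only [Fin.coe_castSucc]
  refine congrArg _ (funext fun k => ?_)
  rw [Bsnoc_mk pp i ↑k (k.isLt.trans t.isLt)]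

lemma BxAt_snoc_last {d n : ℕ} (η q : ℝ) (ℓ : ℕ → Fin d → ℝ) (pp : Fin n → Fin d) (i : Fin d) :
    BxAt d η q ℓ (Fin.snoc pp i) (Fin.last n)
      = BX d η q n (fun k : Fin n => (pp k, ℓ k (pp k))) := by
  unfold BxAt
  simp only [Fin.val_last]
  refine congrArg _ (funext fun k => ?_)
  rw [Bsnoc_mk pp i ↑k k.isLt]

def Bcost (d : ℕ) (η q : ℝ) (ℓ : ℕ → Fin d → ℝ) (u : Fin d → ℝ) {n : ℕ}
    (p : Fin n → Fin d) : ℝ :=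
  ∑ t : Fin n, (ℓ ↑t (p t) / BxAt d η q ℓ p t (p t) * u (p t)
    + q*η/2 * (ℓ ↑t (p t))^2 * (BxAt d η q ℓ p t (p t))^(1/q - 1))

lemma Bcost_snoc {d n : ℕ} (η q : ℝ) (ℓ : ℕ → Fin d → ℝ) (u : Fin d → ℝ)
    (pp : Fin n → Fin d) (i : Fin d) :
    Bcost d η q ℓ u (Fin.snoc pp i) = Bcost d η q ℓ u pp
      + (ℓ n i / (BX d η q n (fun k : Fin n => (pp k, ℓ k (pp k)))) i * u i
        + q*η/2 * (ℓ n i)^2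
          * ((BX d η q n (fun k : Fin n => (pp k, ℓ k (pp k)))) i)^(1/q - 1)) := by
  unfold Bcost
  rw [Fin.sum_univ_castSucc]
  congr 1
  · apply Finset.sum_congr rfl
    intro t _
    rw [BxAt_snoc_lt, Fin.snoc_castSucc]
    simp only [Fin.coe_castSucc]
  · rw [BxAt_snoc_last, Fin.snoc_last]
    simp only [Fin.val_last]

lemma Bexp_cost {d s : ℕ} {η q : ℝ} (hd : 0 < d) (hq : 1 < q) (hη : 0 < η)
    (ℓ : ℕ → Fin d → ℝ)
    (hℓ : ∀ t, (∀ j, ℓ t j ∈ Set.Icc (0:ℝ) 1) ∧ Set.ncard {j | ℓ t j ≠ 0} ≤ s)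
    {u : Fin d → ℝ} (hu : ∀ j, 0 ≤ u j) (hus : ∑ j, u j = 1) :
    ∀ n, ∑ p : Fin n → Fin d, pathProb (BX d η q) ℓ n p * Bcost d η q ℓ u p
      ≤ ∑ t ∈ Finset.range n, ((∑ j, ℓ t j * u j) + q*η/2 * (s:ℝ)^(1-1/q)) := by
  have hσ : IsBanditStrategy (BX d η q) := by
    intro t h
    obtain ⟨h1, h2⟩ := BX_good hd hq hη t h
    exact ⟨fun i => (h1 i).le, h2⟩
  intro n
  induction n with
  | zero =>
    simp [Bcost]
  | succ n ih =>
    rw [Bsum_snoc (fun p => pathProb (BX d η q) ℓ (n+1) p * Bcost d η q ℓ u p)]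
    have hstep : ∀ pp : Fin n → Fin d,
        ∑ i, pathProb (BX d η q) ℓ (n+1) (Fin.snoc pp i) * Bcost d η q ℓ u (Fin.snoc pp i)
          ≤ pathProb (BX d η q) ℓ n pp * Bcost d η q ℓ u pp
            + pathProb (BX d η q) ℓ n pp * ((∑ j, ℓ n j * u j) + q*η/2 * (s:ℝ)^(1-1/q)) := by
      intro pp
      set Y : Fin d → ℝ := BX d η q n (fun k : Fin n => (pp k, ℓ k (pp k))) with hY
      have hYg : BGood Y := BX_good hd hq hη n _
      have hc : ∀ i, pathProb (BX d η q) ℓ (n+1) (Fin.snoc pp i) * Bcost d η q ℓ u (Fin.snoc pp i)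
          = pathProb (BX d η q) ℓ n pp * (Y i * (Bcost d η q ℓ u pp
            + (ℓ n i / Y i * u i + q*η/2 * (ℓ n i)^2 * (Y i)^(1/q - 1)))) := by
        intro i
        rw [BpathProb_snoc (BX d η q) ℓ n pp i, Bcost_snoc]
        ring
      rw [Finset.sum_congr rfl (fun i _ => hc i), ← Finset.mul_sum]
      have hexp : ∑ i, (Y i * (Bcost d η q ℓ u pp
            + (ℓ n i / Y i * u i + q*η/2 * (ℓ n i)^2 * (Y i)^(1/q - 1))))
          = Bcost d η q ℓ u pp * (∑ i, Y i)
            + ∑ i, Y i * (ℓ n i / Y i * u i + q*η/2 * (ℓ n i)^2 * (Y i)^(1/q - 1)) := by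
        rw [Finset.sum_congr rfl (fun i _ => by ring :
          ∀ i ∈ Finset.univ, Y i * (Bcost d η q ℓ u pp
            + (ℓ n i / Y i * u i + q*η/2 * (ℓ n i)^2 * (Y i)^(1/q - 1)))
          = Bcost d η q ℓ u pp * Y i
            + Y i * (ℓ n i / Y i * u i + q*η/2 * (ℓ n i)^2 * (Y i)^(1/q - 1))),
          Finset.sum_add_distrib, ← Finset.mul_sum]
      rw [hexp, hYg.2, mul_one]
      have hmean := Bmean (s := s) hq hη hYg hu (hℓ n).1 (hℓ n).2
      have hP := BpathProb_nonneg hσ ℓ n pp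
      have := mul_le_mul_of_nonneg_left hmean hP
      nlinarith [this]
    calc ∑ pp : Fin n → Fin d, ∑ i,
          pathProb (BX d η q) ℓ (n+1) (Fin.snoc pp i) * Bcost d η q ℓ u (Fin.snoc pp i)
        ≤ ∑ pp : Fin n → Fin d, (pathProb (BX d η q) ℓ n pp * Bcost d η q ℓ u pp
            + pathProb (BX d η q) ℓ n pp * ((∑ j, ℓ n j * u j) + q*η/2 * (s:ℝ)^(1-1/q))) :=
          Finset.sum_le_sum (fun pp _ => hstep pp)
      _ = (∑ pp : Fin n → Fin d, pathProb (BX d η q) ℓ n pp * Bcost d η q ℓ u pp)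
            + ((∑ j, ℓ n j * u j) + q*η/2 * (s:ℝ)^(1-1/q)) := by
          rw [Finset.sum_add_distrib]
          congr 1
          rw [← Finset.sum_mul, Bmass hσ ℓ n, one_mul]
      _ ≤ (∑ t ∈ Finset.range n, ((∑ j, ℓ t j * u j) + q*η/2 * (s:ℝ)^(1-1/q)))
            + ((∑ j, ℓ n j * u j) + q*η/2 * (s:ℝ)^(1-1/q)) := by linarith [ih]
      _ = ∑ t ∈ Finset.range (n+1), ((∑ j, ℓ t j * u j) + q*η/2 * (s:ℝ)^(1-1/q)) := by
          rw [Finset.sum_range_succ]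

/-- Greedy Online Mirror Descent with the Legendre potential `F_q` and
parameter `η` guarantees, against `s`-sparse losses in `[0,1]^d`,
`E[R_T] ≤ q (d^{1/q}/(η(q-1)) + η T s^{1-1/q}/2)`. -/
theorem bandit_sparse_losses_bound (d s T : ℕ) (hd : 1 ≤ d) (hs1 : 1 ≤ s) (hsd : s ≤ d)
    (hT : 1 ≤ T) (η : ℝ) (hη : 0 < η) (q : ℝ) (hq : 1 < q) :
    ∃ σ : ∀ t : ℕ, (Fin t → Fin d × ℝ) → (Fin d → ℝ), IsBanditStrategy σ ∧
      ∀ ℓ : ℕ → Fin d → ℝ, (∀ t, InCube (ℓ t) ∧ IsSparse s (ℓ t)) →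
        banditExpRegret σ ℓ T ≤
          q * ((d : ℝ) ^ (1 / q) / (η * (q - 1)) + η * T * (s : ℝ) ^ (1 - 1 / q) / 2) := by
  have hd0 : 0 < d := hd
  have hq1 : (0:ℝ) < q - 1 := sub_pos.mpr hq
  haveI : Nonempty (Fin d) := Fin.pos_iff_nonempty.mp hd0
  have hσ : IsBanditStrategy (BX d η q) := by
    intro t h
    obtain ⟨h1, h2⟩ := BX_good hd0 hq hη t h
    exact ⟨fun i => (h1 i).le, h2⟩
  refine ⟨BX d η q, hσ, ?_⟩
  intro ℓ hℓ
  have hcube : ∀ t j, ℓ t j ∈ Set.Icc (0:ℝ) 1 := fun t => (hℓ t).1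
  have hsp : ∀ t, Set.ncard {j | ℓ t j ≠ 0} ≤ s := fun t => (hℓ t).2
  set A : ℝ := q * (d:ℝ)^(1/q) / (η * (q - 1)) with hA
  set B : ℝ := q * ((d : ℝ) ^ (1 / q) / (η * (q - 1)) + η * T * (s : ℝ) ^ (1 - 1 / q) / 2)
    with hB
  have hmain : ∀ i₀ : Fin d,
      (∑ p : Fin T → Fin d, pathProb (BX d η q) ℓ T p * ∑ t : Fin T, ℓ ↑t (p t))
        ≤ B + ∑ t ∈ Finset.range T, ℓ t i₀ := by
    intro i₀
    set u : Fin d → ℝ := fun j => if j = i₀ then 1 else 0 with hudef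
    have hu : ∀ j, 0 ≤ u j := by
      intro j
      rw [hudef]
      dsimp only
      split <;> norm_num
    have hus : ∑ j, u j = 1 := by
      rw [hudef]
      simp
    -- pointwise master bound along each decision path
    have hpt : ∀ p : Fin T → Fin d,
        (∑ t : Fin T, ℓ ↑t (p t)) ≤ A + Bcost d η q ℓ u p := by
      intro p
      set pext : ℕ → Fin d := fun k => if h : k < T then p ⟨k, h⟩ else p ⟨0, hT⟩ with hpext
      have hpe : ∀ (k : ℕ) (h : k < T), pext k = p ⟨k, h⟩ := by
        intro k h
        rw [hpext]
        exact dif_pos h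
      have hxeq : ∀ t : Fin T, BxAt d η q ℓ p t = Bxp d η q ℓ pext ↑t := by
        intro t
        unfold BxAt Bxp
        refine congrArg _ (funext fun k => ?_)
        rw [hpe ↑k (lt_trans k.isLt t.isLt)]
      have hm := Bmaster hd0 hq hη ℓ hcube pext hu hus T
      have hconv : ∀ t : Fin T,
          ℓ ↑t (pext ↑t) - (ℓ ↑t (pext ↑t) / Bxp d η q ℓ pext ↑t (pext ↑t) * u (pext ↑t)
            + q*η/2 * (ℓ ↑t (pext ↑t))^2 * (Bxp d η q ℓ pext ↑t (pext ↑t))^(1/q - 1))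
          = ℓ ↑t (p t) - (ℓ ↑t (p t) / BxAt d η q ℓ p t (p t) * u (p t)
            + q*η/2 * (ℓ ↑t (p t))^2 * (BxAt d η q ℓ p t (p t))^(1/q - 1)) := by
        intro t
        rw [hxeq t, hpe ↑t t.isLt]
      have hm2 : ∑ t : Fin T, (ℓ ↑t (p t) -
          (ℓ ↑t (p t) / BxAt d η q ℓ p t (p t) * u (p t)
            + q*η/2 * (ℓ ↑t (p t))^2 * (BxAt d η q ℓ p t (p t))^(1/q - 1))) ≤ A := by
        calc ∑ t : Fin T, (ℓ ↑t (p t) -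
              (ℓ ↑t (p t) / BxAt d η q ℓ p t (p t) * u (p t)
                + q*η/2 * (ℓ ↑t (p t))^2 * (BxAt d η q ℓ p t (p t))^(1/q - 1)))
            = ∑ t : Fin T, (ℓ ↑t (pext ↑t) -
              (ℓ ↑t (pext ↑t) / Bxp d η q ℓ pext ↑t (pext ↑t) * u (pext ↑t)
                + q*η/2 * (ℓ ↑t (pext ↑t))^2 * (Bxp d η q ℓ pext ↑t (pext ↑t))^(1/q - 1))) :=
              Finset.sum_congr rfl (fun t _ => (hconv t).symm)
          _ = ∑ t ∈ Finset.range T, (ℓ t (pext t) -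
              (ℓ t (pext t) / Bxp d η q ℓ pext t (pext t) * u (pext t)
                + q*η/2 * (ℓ t (pext t))^2 * (Bxp d η q ℓ pext t (pext t))^(1/q - 1))) :=
              Fin.sum_univ_eq_sum_range (fun k => ℓ k (pext k) -
                (ℓ k (pext k) / Bxp d η q ℓ pext k (pext k) * u (pext k)
                  + q*η/2 * (ℓ k (pext k))^2 * (Bxp d η q ℓ pext k (pext k))^(1/q - 1))) T
          _ ≤ A := hm
      have hsub : ∑ t : Fin T, (ℓ ↑t (p t) -
          (ℓ ↑t (p t) / BxAt d η q ℓ p t (p t) * u (p t)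
            + q*η/2 * (ℓ ↑t (p t))^2 * (BxAt d η q ℓ p t (p t))^(1/q - 1)))
          = (∑ t : Fin T, ℓ ↑t (p t)) - Bcost d η q ℓ u p := by
        rw [Finset.sum_sub_distrib]
        rfl
      rw [hsub] at hm2
      linarith
    have hLu : ∀ t, (∑ j, ℓ t j * u j) = ℓ t i₀ := by
      intro t
      have h1 : ∀ j, ℓ t j * u j = if j = i₀ then ℓ t j else 0 := by
        intro j
        rw [hudef]
        dsimp only
        split <;> ring
      rw [Finset.sum_congr rfl (fun j _ => h1 j), Finset.sum_ite_eq' Finset.univ i₀ (fun j => ℓ t j)]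
      simp
    have hE := Bexp_cost (s := s) hd0 hq hη ℓ (fun t => ⟨hcube t, hsp t⟩) hu hus T
    have hE' : ∑ p : Fin T → Fin d, pathProb (BX d η q) ℓ T p * Bcost d η q ℓ u p
        ≤ (∑ t ∈ Finset.range T, ℓ t i₀) + (T:ℝ) * (q*η/2 * (s:ℝ)^(1-1/q)) := by
      calc ∑ p : Fin T → Fin d, pathProb (BX d η q) ℓ T p * Bcost d η q ℓ u p
          ≤ ∑ t ∈ Finset.range T, ((∑ j, ℓ t j * u j) + q*η/2 * (s:ℝ)^(1-1/q)) := hE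
        _ = ∑ t ∈ Finset.range T, (ℓ t i₀ + q*η/2 * (s:ℝ)^(1-1/q)) :=
            Finset.sum_congr rfl (fun t _ => by rw [hLu t])
        _ = (∑ t ∈ Finset.range T, ℓ t i₀) + (T:ℝ) * (q*η/2 * (s:ℝ)^(1-1/q)) := by
            rw [Finset.sum_add_distrib, Finset.sum_const, Finset.card_range, nsmul_eq_mul]
    calc ∑ p : Fin T → Fin d, pathProb (BX d η q) ℓ T p * ∑ t : Fin T, ℓ ↑t (p t)
        ≤ ∑ p : Fin T → Fin d, pathProb (BX d η q) ℓ T p * (A + Bcost d η q ℓ u p) :=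
          Finset.sum_le_sum (fun p _ =>
            mul_le_mul_of_nonneg_left (hpt p) (BpathProb_nonneg hσ ℓ T p))
      _ = A * (∑ p : Fin T → Fin d, pathProb (BX d η q) ℓ T p)
            + ∑ p : Fin T → Fin d, pathProb (BX d η q) ℓ T p * Bcost d η q ℓ u p := by
          rw [Finset.sum_congr rfl (fun p _ => by ring :
            ∀ p ∈ Finset.univ, pathProb (BX d η q) ℓ T p * (A + Bcost d η q ℓ u p)
              = A * pathProb (BX d η q) ℓ T p
                + pathProb (BX d η q) ℓ T p * Bcost d η q ℓ u p),
            Finset.sum_add_distrib, ← Finset.mul_sum]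
      _ = A + ∑ p : Fin T → Fin d, pathProb (BX d η q) ℓ T p * Bcost d η q ℓ u p := by
          rw [Bmass hσ ℓ T, mul_one]
      _ ≤ A + ((∑ t ∈ Finset.range T, ℓ t i₀) + (T:ℝ) * (q*η/2 * (s:ℝ)^(1-1/q))) := by
          linarith [hE']
      _ = B + ∑ t ∈ Finset.range T, ℓ t i₀ := by
          rw [hA, hB]
          ring
  unfold banditExpRegret
  rw [sub_le_iff_le_add]
  have hinf : (∑ p : Fin T → Fin d, pathProb (BX d η q) ℓ T p * ∑ t : Fin T, ℓ ↑t (p t)) - B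
      ≤ ⨅ i, ∑ t ∈ Finset.range T, ℓ t i :=
    le_ciInf (fun i₀ => by linarith [hmain i₀])
  linarith

end
end

section
/- Let d ≥ 1 and s be an integer with 1 ≤ s ≤ d, set p = s/(2d), and let ε be a real number with 0 < ε ≤ s/(4d). Then the relative entropy between the Bernoulli distributions of parameters p and p − ε satisfies p · log( p/(p − ε) ) + (1 − p) · log( (1 − p)/(1 − p + ε) ) ≤ 4 d² ε² / ( s (2d − s) ). -/
open Real

/-- For `0 < t ≤ 1/2`, `-log (1 - t) ≤ t + t ^ 2`. -/
lemma neg_log_one_sub_le {t : ℝ} (ht0 : 0 < t) (ht : t ≤ 1 / 2) :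
    -Real.log (1 - t) ≤ t + t ^ 2 := by
  have h1 : (0:ℝ) < 1 - t := by linarith
  have hq : 1 + (t + t ^ 2) + (t + t ^ 2) ^ 2 / 2 ≤ Real.exp (t + t ^ 2) :=
    Real.quadratic_le_exp_of_nonneg (by nlinarith)
  have hkey : Real.exp (-(t + t ^ 2)) ≤ 1 - t := by
    rw [Real.exp_neg]
    rw [inv_le_iff_one_le_mul₀ (Real.exp_pos _)]
    nlinarith [Real.exp_pos (t + t ^ 2)]
  have := Real.log_le_log (Real.exp_pos _) hkey
  rw [Real.log_exp] at this
  linarith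

/-- Upper bound on the Kullback–Leibler divergence between Bernoulli
distributions of parameters `p = s/(2d)` and `p - ε`, for `0 < ε ≤ s/(4d)`:
`D(B(1,p) ‖ B(1,p-ε)) ≤ 4 d² ε² / (s (2d - s))`. -/
theorem bernoulli_kl_upper_bound (d s : ℕ) (hd : 1 ≤ d) (hs1 : 1 ≤ s) (hsd : s ≤ d)
    (ε : ℝ) (hε : 0 < ε) (hε' : ε ≤ (s : ℝ) / (4 * d)) :
    ((s : ℝ) / (2 * d)) * Real.log (((s : ℝ) / (2 * d)) / ((s : ℝ) / (2 * d) - ε)) +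
      (1 - (s : ℝ) / (2 * d)) *
        Real.log ((1 - (s : ℝ) / (2 * d)) / (1 - (s : ℝ) / (2 * d) + ε)) ≤
      4 * (d : ℝ) ^ 2 * ε ^ 2 / (s * (2 * d - s)) := by
  have hd1 : (1:ℝ) ≤ d := by exact_mod_cast hd
  have hs1' : (1:ℝ) ≤ s := by exact_mod_cast hs1
  have hsd' : (s:ℝ) ≤ d := by exact_mod_cast hsd
  set p : ℝ := (s : ℝ) / (2 * d) with hp
  have hdpos : (0:ℝ) < 2 * d := by linarith
  have hp0 : 0 < p := by positivity
  have hp2 : p ≤ 1 / 2 := by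
    rw [hp, div_le_div_iff₀ hdpos (by norm_num)]; linarith
  have hεp : ε ≤ p / 2 := by
    have : (s : ℝ) / (4 * d) = p / 2 := by rw [hp]; ring
    linarith [this ▸ hε']
  have hpε : 0 < p - ε := by linarith
  have h1p : 0 < 1 - p := by linarith
  have h1pε : 0 < 1 - p + ε := by linarith
  -- first term
  set t : ℝ := ε / p with htdef
  have ht0 : 0 < t := by positivity
  have ht2 : t ≤ 1 / 2 := by
    rw [htdef, div_le_iff₀ hp0]; linarith
  have hlog1 : Real.log (p / (p - ε)) ≤ t + t ^ 2 := by
    have heq : p / (p - ε) = (1 - t)⁻¹ := by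
      rw [htdef]; field_simp
    rw [heq, Real.log_inv]
    exact neg_log_one_sub_le ht0 ht2
  have hfirst : p * Real.log (p / (p - ε)) ≤ ε + ε ^ 2 / p := by
    have h := mul_le_mul_of_nonneg_left hlog1 hp0.le
    have : p * (t + t ^ 2) = ε + ε ^ 2 / p := by
      rw [htdef]; field_simp
    linarith [this ▸ h]
  -- second term
  have hlog2 : Real.log ((1 - p) / (1 - p + ε)) ≤ (1 - p) / (1 - p + ε) - 1 :=
    Real.log_le_sub_one_of_pos (by positivity)
  have hsecond : (1 - p) * Real.log ((1 - p) / (1 - p + ε)) ≤ -ε + ε ^ 2 / (1 - p) := by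
    have h := mul_le_mul_of_nonneg_left hlog2 h1p.le
    have key : (1 - p) * ((1 - p) / (1 - p + ε) - 1) ≤ -ε + ε ^ 2 / (1 - p) := by
      have heq : (1 - p) * ((1 - p) / (1 - p + ε) - 1) = -ε + ε ^ 2 / (1 - p + ε) := by
        field_simp; ring
      have h2 : ε ^ 2 / (1 - p + ε) ≤ ε ^ 2 / (1 - p) := by
        apply div_le_div_of_nonneg_left (by positivity) h1p (by linarith)
      linarith [heq ▸ le_refl ((1 - p) * ((1 - p) / (1 - p + ε) - 1)), heq]
      
    linarith
  -- combine
  have hrhs : 4 * (d : ℝ) ^ 2 * ε ^ 2 / (s * (2 * d - s)) = ε ^ 2 / p + ε ^ 2 / (1 - p) := by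
    rw [hp]
    have h2ds : (0:ℝ) < 2 * d - s := by linarith
    have h2ds' : (d:ℝ) * 2 - s ≠ 0 := ne_of_gt (by linarith)
    field_simp
    ring
  rw [hrhs]
  linarith
end
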